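/- arXiv:1412.3323 — 8 statements merged into one kernel-verified Lean document; each statement's English description precedes it below -/
import Mathlib

section
/- For every natural number n, the dimension over ℚ of the vector space of homogeneous polynomials p(v,w) of degree n in two variables over ℚ satisfying the two functional equations p(v,w) = -p(v+w, -w) and p(v,w) = -p(w,v) equals 0 if n is odd, and equals ⌊n/6⌋ if n is even. -/
open MvPolynomial

/-- The substitution endomorphism `p(v,w) ↦ p(v+w, -w)`. -/
noncomputable def substT : MvPolynomial (Fin 2) ℚ →ₗ[ℚ] MvPolynomial (Fin 2) ℚ :=
  (aeval ![X 0 + X 1, -X 1]).toLinearMap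

/-- The substitution endomorphism `p(v,w) ↦ p(w, v)`. -/
noncomputable def substS : MvPolynomial (Fin 2) ℚ →ₗ[ℚ] MvPolynomial (Fin 2) ℚ :=
  (aeval ![X 1, X 0]).toLinearMap

namespace DimKer

abbrev A := MvPolynomial (Fin 2) ℚ

noncomputable def lin (a b : ℚ) : A := C a * X 0 + C b * X 1

lemma substT_apply (p : A) : substT p = aeval ![X 0 + X 1, -X 1] p := rfl
lemma substS_apply (p : A) : substS p = aeval ![X 1, X 0] p := rfl
lemma substT_mul (p q : A) : substT (p * q) = substT p * substT q := by
  simp [substT_apply]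
lemma substS_mul (p q : A) : substS (p * q) = substS p * substS q := by
  simp [substS_apply]
lemma substT_pow (p : A) (k : ℕ) : substT (p ^ k) = substT p ^ k := by
  simp [substT_apply]
lemma substS_pow (p : A) (k : ℕ) : substS (p ^ k) = substS p ^ k := by
  simp [substS_apply]
lemma substT_dvd {p q : A} (h : p ∣ q) : substT p ∣ substT q := by
  rw [substT_apply, substT_apply]; exact map_dvd _ h
lemma substS_dvd {p q : A} (h : p ∣ q) : substS p ∣ substS q := by
  rw [substS_apply, substS_apply]; exact map_dvd _ h

lemma aeval_lin (g : Fin 2 → A) (a b : ℚ) :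
    aeval g (lin a b) = C a * g 0 + C b * g 1 := by
  simp [lin, algebraMap_eq]

lemma substT_lin (a b : ℚ) : substT (lin a b) = lin a (a - b) := by
  rw [substT_apply, aeval_lin]
  simp only [Matrix.cons_val_zero, Matrix.cons_val_one, Matrix.head_cons, lin, map_sub]
  ring

lemma substS_lin (a b : ℚ) : substS (lin a b) = lin b a := by
  rw [substS_apply, aeval_lin]
  simp only [Matrix.cons_val_zero, Matrix.cons_val_one, Matrix.head_cons, lin]
  ring

lemma lin_neg (a b : ℚ) : lin (-a) (-b) = - lin a b := by simp [lin]; ring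
lemma lin_isHomogeneous (a b : ℚ) : (lin a b).IsHomogeneous 1 := by
  apply MvPolynomial.IsHomogeneous.add <;> exact isHomogeneous_C_mul_X _ _
lemma lin_zero_one : lin 0 1 = (X 1 : A) := by simp [lin]
lemma lin_one_zero : lin 1 0 = (X 0 : A) := by simp [lin]
lemma lin_one_one : lin 1 1 = (X 0 + X 1 : A) := by simp [lin]
lemma lin_one_negone : lin 1 (-1) = (X 0 - X 1 : A) := by simp [lin]; ring

/-! ### primality of linear forms -/

lemma prime_ringEquiv {R S : Type*} [CommRing R] [CommRing S] (e : R ≃+* S) {p : R}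
    (h : Prime p) : Prime (e p) :=
  (MulEquiv.prime_iff (e.toMulEquiv)).mpr h

lemma prime_X0 : Prime (X 0 : A) := by
  have h : Prime (Polynomial.X : Polynomial (MvPolynomial (Fin 1) ℚ)) := Polynomial.prime_X
  have h2 := prime_ringEquiv (MvPolynomial.finSuccEquiv ℚ 1).symm.toRingEquiv h
  have e : (MvPolynomial.finSuccEquiv ℚ 1).symm.toRingEquiv Polynomial.X = (X 0 : A) := by
    have := finSuccEquiv_X_zero (R := ℚ) (n := 1)
    exact ((AlgEquiv.symm_apply_eq _).mpr this.symm)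
  rwa [e] at h2

/-- algebra automorphism sending X0 to `lin a b` (a ≠ 0), fixing X1 -/
noncomputable def linEquiv (a b : ℚ) (ha : a ≠ 0) : A ≃ₐ[ℚ] A := by
  have hC : (C a⁻¹ : A) * C a = 1 := by rw [← C_mul, inv_mul_cancel₀ ha, C_1]
  have k1 : ((aeval ![lin a b, X 1] : A →ₐ[ℚ] A).comp
      (aeval ![C a⁻¹ * (X 0 - C b * X 1), X 1])) (X 0) = X 0 := by
    simp only [AlgHom.coe_comp, Function.comp_apply, aeval_X, Matrix.cons_val_zero,
      map_mul, map_sub, aeval_C, algebraMap_eq, aeval_X, Matrix.cons_val_one,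
      Matrix.head_cons, lin]
    linear_combination (X 0 : A) * hC
  have k2 : ((aeval ![C a⁻¹ * (X 0 - C b * X 1), X 1] : A →ₐ[ℚ] A).comp
      (aeval ![lin a b, X 1])) (X 0) = X 0 := by
    simp only [AlgHom.coe_comp, Function.comp_apply, aeval_X, Matrix.cons_val_zero,
      map_mul, map_sub, map_add, aeval_C, algebraMap_eq, aeval_X, Matrix.cons_val_one,
      Matrix.head_cons, lin]
    linear_combination (X 0 - C b * X 1 : A) * hC
  refine AlgEquiv.ofAlgHom (aeval ![lin a b, X 1])
    (aeval ![C a⁻¹ * (X 0 - C b * X 1), X 1]) ?_ ?_ <;>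
  · apply MvPolynomial.algHom_ext
    intro i
    fin_cases i
    · simp only [AlgHom.id_apply, Fin.zero_eta]
      first | with_reducible exact k1 | with_reducible exact k2
    · simp

lemma linEquiv_X0 (a b : ℚ) (ha : a ≠ 0) : linEquiv a b ha (X 0) = lin a b := by
  show aeval _ (X 0 : A) = _
  simp

lemma prime_lin (a b : ℚ) (ha : a ≠ 0) : Prime (lin a b) := by
  have := prime_ringEquiv (linEquiv a b ha).toRingEquiv prime_X0
  rwa [show (linEquiv a b ha).toRingEquiv (X 0) = lin a b from linEquiv_X0 a b ha] at this

noncomputable def swapEquiv : A ≃ₐ[ℚ] A := by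
  refine AlgEquiv.ofAlgHom (aeval ![X 1, X 0]) (aeval ![X 1, X 0]) ?_ ?_ <;>
  · apply MvPolynomial.algHom_ext
    intro i
    fin_cases i <;> simp

lemma prime_X1 : Prime (X 1 : A) := by
  have := prime_ringEquiv swapEquiv.toRingEquiv prime_X0
  rwa [show swapEquiv.toRingEquiv (X 0) = (X 1 : A) by show aeval _ (X 0 : A) = _; simp] at this

lemma prime_lin01 : Prime (lin 0 1) := lin_zero_one ▸ prime_X1

/-- not-divisibility of linear forms -/
lemma lin_not_dvd {a b a' b' : ℚ} (h : a' * b ≠ b' * a) : ¬ lin a b ∣ lin a' b' := by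
  intro hdvd
  have := map_dvd (eval ![b, -a] : A →+* ℚ).toMonoidHom hdvd
  simp only [RingHom.toMonoidHom_eq_coe, MonoidHom.coe_coe, lin, map_add, map_mul, eval_C,
    eval_X, Matrix.cons_val_zero, Matrix.cons_val_one, Matrix.head_cons] at this
  rw [show a * b + b * -a = 0 by ring] at this
  rw [zero_dvd_iff] at this
  apply h
  linarith

lemma prime_extract {l q r : A} (hl : Prime l) (h : l ∣ q * r) (hnd : ¬ l ∣ q) : l ∣ r :=
  (hl.dvd_or_dvd h).resolve_left hnd

lemma prime_sq_extract {l D r : A} (hl : Prime l) (h : l ^ 2 ∣ D * r) (hnd : ¬ l ∣ D) :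
    l ^ 2 ∣ r := by
  have hstep : ∀ s : A, l ∣ D * s → l ∣ s := fun s hs => (hl.dvd_or_dvd hs).resolve_left hnd
  have h1 : l ∣ r := hstep r (dvd_trans (dvd_pow_self l (by norm_num)) h)
  obtain ⟨r1, rfl⟩ := h1
  have h2 : l * l ∣ l * (D * r1) := by
    rw [show l * (D * r1) = D * (l * r1) by ring, ← pow_two]
    exact h
  have h3 : l ∣ D * r1 := (mul_dvd_mul_iff_left hl.ne_zero).mp h2
  rw [pow_two]
  exact mul_dvd_mul_left l (hstep r1 h3)

lemma not_dvd_mul {l a b : A} (hl : Prime l) (ha : ¬ l ∣ a) (hb : ¬ l ∣ b) : ¬ l ∣ a * b :=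
  fun h => ((hl.dvd_or_dvd h).elim ha hb)

lemma not_dvd_sq {l a : A} (hl : Prime l) (ha : ¬ l ∣ a) : ¬ l ∣ a ^ 2 :=
  fun h => ha (hl.dvd_of_dvd_pow h)

lemma step {p D q l : A} (hl : Prime l) (e : p = D * q) (hdvd : l ∣ p) (hnd : ¬ l ∣ D) :
    ∃ q', p = (D * l) * q' := by
  obtain ⟨q', rfl⟩ := prime_extract hl (e ▸ hdvd) hnd
  exact ⟨q', by rw [e]; ring⟩

lemma step_sq {p D q l : A} (hl : Prime l) (e : p = D * q) (hdvd : l ^ 2 ∣ p)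
    (hnd : ¬ l ∣ D) : ∃ q', p = (D * l ^ 2) * q' := by
  obtain ⟨q', rfl⟩ := prime_sq_extract hl (e ▸ hdvd) hnd
  exact ⟨q', by rw [e]; ring⟩

/-! ### degrees, coefficients, restriction to the line `w = 0` -/

lemma degree_fin2 (d : Fin 2 →₀ ℕ) : d.degree = d 0 + d 1 := by
  rw [Finsupp.degree_apply]
  rw [Finset.sum_subset (Finset.subset_univ d.support)
    (by intro i _ hi; exact Finsupp.notMem_support_iff.mp hi), Fin.sum_univ_two]

lemma homog_deg {p : A} {m : ℕ} (hp : p.IsHomogeneous m) {d : Fin 2 →₀ ℕ}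
    (hd : coeff d p ≠ 0) : d 0 + d 1 = m := by
  have := hp hd
  rw [Pi.one_def, ← Finsupp.degree_eq_weight_one] at this
  rw [← degree_fin2]; exact this

lemma eq_single {d : Fin 2 →₀ ℕ} {m : ℕ} (h0 : d 0 = m) (h1 : d 1 = 0) :
    d = Finsupp.single 0 m := by
  ext i
  fin_cases i <;> simp [h0, h1]

/-- restriction to the line w = 0 -/
noncomputable def ρ : A →ₐ[ℚ] Polynomial ℚ := aeval ![Polynomial.X, 0]

lemma restrict_homog {m : ℕ} {p : A} (hp : p.IsHomogeneous m) :
    ρ p = Polynomial.C (coeff (Finsupp.single 0 m) p) * Polynomial.X ^ m := by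
  conv_lhs => rw [p.as_sum]
  rw [map_sum]
  have hterm : ∀ d : Fin 2 →₀ ℕ, ρ (monomial d (coeff d p)) =
      Polynomial.C (coeff d p) * Polynomial.X ^ (d 0) * (0 : Polynomial ℚ) ^ (d 1) := by
    intro d
    rw [ρ, aeval_monomial, Finsupp.prod_fintype _ _ (fun i => pow_zero _)]
    simp [Fin.prod_univ_two, Algebra.algebraMap_self_apply, mul_assoc]
  rw [Finset.sum_eq_single (Finsupp.single 0 m)]
  · rw [hterm]
    simp
  · intro d hdsup hdne
    rw [hterm]
    have hd : coeff d p ≠ 0 := mem_support_iff.mp hdsup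
    have hdeg := homog_deg hp hd
    have h1 : d 1 ≠ 0 := by
      intro h1
      exact hdne (eq_single (by omega) h1)
    rw [zero_pow h1, mul_zero]
  · intro hns
    rw [hterm]
    rw [notMem_support_iff.mp hns]
    simp

lemma coeff_single_of_rho {m : ℕ} {p : A} (hp : p.IsHomogeneous m) (h : ρ p = 0) :
    coeff (Finsupp.single 0 m) p = 0 := by
  have hr := restrict_homog hp
  rw [h] at hr
  have := congrArg (fun q => Polynomial.coeff q m) hr
  simpa using this.symm

/-- key: homogeneous p with zero top coefficient is divisible by X 1 -/
lemma X1_dvd {m : ℕ} {p : A} (hp : p.IsHomogeneous m)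
    (h : coeff (Finsupp.single 0 m) p = 0) : (X 1 : A) ∣ p := by
  conv_rhs => rw [p.as_sum]
  apply Finset.dvd_sum
  intro d hd
  rw [X_dvd_monomial]
  rcases eq_or_ne (d 1) 0 with h1 | h1
  · left
    have hdeg := homog_deg hp (mem_support_iff.mp hd)
    rw [eq_single (show d 0 = m by omega) h1]
    exact h
  · right; exact h1

lemma X1_dvd_of_rho {m : ℕ} {p : A} (hp : p.IsHomogeneous m) (h : ρ p = 0) :
    (X 1 : A) ∣ p :=
  X1_dvd hp (coeff_single_of_rho hp h)

lemma rho_substT (q : A) : ρ (substT q) = ρ q := by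
  rw [substT_apply, ← AlgHom.comp_apply]
  congr 1
  apply MvPolynomial.algHom_ext
  intro i
  fin_cases i <;> simp [ρ]

lemma rho_of_anti {q : A} (h : substT q = -q) : ρ q = 0 := by
  have h1 : ρ q = -ρ q := by
    conv_lhs => rw [← rho_substT q, h, map_neg]
  have h2 : (2 : ℚ) • ρ q = 0 := by
    rw [two_smul]
    nth_rewrite 1 [h1]
    exact neg_add_cancel _
  exact (smul_eq_zero.mp h2).resolve_left (by norm_num)

/-! ### homogeneous factors -/

lemma factor_comps {p l g : A} {n k : ℕ} (hl : l.IsHomogeneous k) (hl0 : l ≠ 0)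
    (hp : p.IsHomogeneous n) (hpg : p = l * g) :
    ∀ i, k + i ≠ n → homogeneousComponent i g = 0 := by
  intro i0 hi0
  by_cases hin : i0 ∈ Finset.range (g.totalDegree + 1)
  case neg =>
    apply homogeneousComponent_eq_zero
    simp [Finset.mem_range] at hin
    omega
  case pos =>
    have h1 : homogeneousComponent (k + i0) p = 0 := by
      rw [homogeneousComponent_of_mem hp, if_neg hi0]
    have h2 : p = ∑ i ∈ Finset.range (g.totalDegree + 1), l * homogeneousComponent i g := by
      rw [hpg, ← Finset.mul_sum, sum_homogeneousComponent]
    rw [h2, map_sum] at h1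
    have h3 : ∀ i ∈ Finset.range (g.totalDegree + 1), i ≠ i0 →
        homogeneousComponent (k + i0) (l * homogeneousComponent i g) = 0 := by
      intro i _ hi
      rw [homogeneousComponent_of_mem (hl.mul (homogeneousComponent_isHomogeneous i g)),
        if_neg (by omega)]
    rw [Finset.sum_eq_single_of_mem i0 hin h3] at h1
    rw [homogeneousComponent_of_mem (hl.mul (homogeneousComponent_isHomogeneous i0 g)),
      if_pos rfl] at h1
    rcases mul_eq_zero.mp h1 with h | h
    · exact absurd h hl0
    · exact h

lemma factor_homog {p l g : A} {n k : ℕ} (hl : l.IsHomogeneous k) (hl0 : l ≠ 0)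
    (hp : p.IsHomogeneous n) (hpg : p = l * g) (hkn : k ≤ n) :
    g.IsHomogeneous (n - k) := by
  have hc := factor_comps hl hl0 hp hpg
  have hsum := sum_homogeneousComponent g
  by_cases hin : (n - k) ∈ Finset.range (g.totalDegree + 1)
  case neg =>
    have : g = 0 := by
      rw [← hsum]
      apply Finset.sum_eq_zero
      intro i hi
      apply hc
      intro hkeq
      exact hin ((show n - k = i by omega) ▸ hi)
    rw [this]; exact isHomogeneous_zero _ _ _
  case pos =>
    rw [Finset.sum_eq_single_of_mem (n - k) hin
      (fun i _ hi => hc i (by omega))] at hsum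
    rw [← hsum]
    exact homogeneousComponent_isHomogeneous _ _

lemma factor_zero {p l g : A} {n k : ℕ} (hl : l.IsHomogeneous k) (hl0 : l ≠ 0)
    (hp : p.IsHomogeneous n) (hpg : p = l * g) (hkn : n < k) : p = 0 := by
  have hc := factor_comps hl hl0 hp hpg
  have : g = 0 := by
    rw [← sum_homogeneousComponent g]
    exact Finset.sum_eq_zero fun i _ => hc i (by omega)
  rw [hpg, this, mul_zero]

/-! ### the invariant polynomials f2, f6 and the anti-invariant J -/

noncomputable def f2 : A := X 0 ^ 2 + X 0 * X 1 + X 1 ^ 2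
noncomputable def f6 : A := (lin 0 1 * lin 1 0 * lin 1 1) ^ 2
noncomputable def J : A :=
  lin 0 1 * lin 1 0 * lin 1 1 * lin 1 (-1) * lin 2 1 * lin 1 2

lemma substT_f2 : substT f2 = f2 := by
  rw [substT_apply, f2]
  simp only [map_add, map_mul, map_pow, aeval_X, Matrix.cons_val_zero, Matrix.cons_val_one,
    Matrix.head_cons, map_neg]
  ring

lemma substS_f2 : substS f2 = f2 := by
  rw [substS_apply, f2]
  simp only [map_add, map_mul, map_pow, aeval_X, Matrix.cons_val_zero, Matrix.cons_val_one,
    Matrix.head_cons]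
  ring

lemma substT_f6 : substT f6 = f6 := by
  rw [f6, substT_pow, substT_mul, substT_mul, substT_lin, substT_lin, substT_lin]
  norm_num
  rw [show lin 0 (-1) = -lin 0 1 by rw [← lin_neg]; norm_num]
  ring

lemma substS_f6 : substS f6 = f6 := by
  rw [f6, substS_pow, substS_mul, substS_mul, substS_lin, substS_lin, substS_lin]
  ring

lemma substT_J : substT J = -J := by
  rw [J]
  rw [substT_mul, substT_mul, substT_mul, substT_mul, substT_mul,
    substT_lin, substT_lin, substT_lin, substT_lin, substT_lin, substT_lin]
  norm_num
  rw [show lin 0 (-1) = -lin 0 1 by rw [← lin_neg]; norm_num]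
  ring

lemma substS_J : substS J = -J := by
  rw [J]
  rw [substS_mul, substS_mul, substS_mul, substS_mul, substS_mul,
    substS_lin, substS_lin, substS_lin, substS_lin, substS_lin, substS_lin]
  rw [show lin (-1) 1 = -lin 1 (-1) by rw [← lin_neg]; norm_num]
  ring

lemma f2_isHomogeneous : f2.IsHomogeneous 2 := by
  rw [f2]
  apply MvPolynomial.IsHomogeneous.add
  apply MvPolynomial.IsHomogeneous.add
  · exact isHomogeneous_X_pow _ _
  · exact (isHomogeneous_X _ _).mul (isHomogeneous_X _ _)
  · exact isHomogeneous_X_pow _ _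

lemma f6_isHomogeneous : f6.IsHomogeneous 6 := by
  rw [f6]
  exact (((lin_isHomogeneous 0 1).mul (lin_isHomogeneous 1 0)).mul (lin_isHomogeneous 1 1)).pow 2

lemma J_isHomogeneous : J.IsHomogeneous 6 := by
  rw [J]
  exact (((((lin_isHomogeneous 0 1).mul (lin_isHomogeneous 1 0)).mul
    (lin_isHomogeneous 1 1)).mul (lin_isHomogeneous 1 (-1))).mul
    (lin_isHomogeneous 2 1)).mul (lin_isHomogeneous 1 2)

lemma f6_ne_zero : f6 ≠ 0 := by
  rw [f6]
  exact pow_ne_zero _ (mul_ne_zero (mul_ne_zero prime_lin01.ne_zero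
    (prime_lin 1 0 one_ne_zero).ne_zero) (prime_lin 1 1 one_ne_zero).ne_zero)

lemma J_ne_zero : J ≠ 0 := by
  rw [J]
  exact mul_ne_zero (mul_ne_zero (mul_ne_zero (mul_ne_zero (mul_ne_zero
    prime_lin01.ne_zero (prime_lin 1 0 one_ne_zero).ne_zero)
    (prime_lin 1 1 one_ne_zero).ne_zero) (prime_lin 1 (-1) one_ne_zero).ne_zero)
    (prime_lin 2 1 two_ne_zero).ne_zero) (prime_lin 1 2 one_ne_zero).ne_zero

lemma rho_f2 : ρ f2 = Polynomial.X ^ 2 := by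
  rw [ρ, f2]
  simp

lemma rho_f6 : ρ f6 = 0 := by
  rw [ρ, f6, lin_zero_one, lin_one_zero, lin_one_one]
  simp

/-! ### diagonal divisibility -/

lemma diag_dvd_sub (p : A) : (X 0 - X 1 : A) ∣ (p - substS p) := by
  induction p using MvPolynomial.induction_on with
  | C a => simp [substS_apply]
  | add p q hp hq =>
      have : p + q - substS (p + q) = (p - substS p) + (q - substS q) := by
        rw [map_add]; ring
      rw [this]; exact dvd_add hp hq
  | mul_X p i hp =>
      have hX : substS (p * X i) = substS p * substS (X i) := by simp [substS_apply]
      have key : p * X i - substS (p * X i)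
          = (p - substS p) * X i + substS p * (X i - substS (X i)) := by
        rw [hX]; ring
      rw [key]
      apply dvd_add
      · exact hp.mul_right _
      · apply Dvd.dvd.mul_left
        fin_cases i
        · show (X 0 - X 1 : A) ∣ X 0 - substS (X 0)
          have : substS (X (0 : Fin 2)) = X 1 := by simp [substS_apply]
          rw [this]
        · show (X 0 - X 1 : A) ∣ X 1 - substS (X 1)
          have : substS (X (1 : Fin 2)) = X 0 := by simp [substS_apply]
          rw [this]
          exact ⟨-1, by ring⟩

/-! ### the antipode and odd degrees -/

lemma homog_deg_eq {p : A} {m : ℕ} (hp : p.IsHomogeneous m) :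
    ∀ d ∈ p.support, d 0 + d 1 = m := fun d hd => homog_deg hp (mem_support_iff.mp hd)

noncomputable def vU : Fin 2 → A := ![X 0 + X 1, -X 0]
noncomputable def vU2 : Fin 2 → A := ![X 1, -X 0 - X 1]
noncomputable def vNeg : Fin 2 → A := ![-X 0, -X 1]

lemma antipode_homog {n : ℕ} {p : A} (hp : p.IsHomogeneous n) :
    aeval vNeg p = (-1 : A) ^ n * p := by
  conv_lhs => rw [p.as_sum]
  rw [map_sum]
  conv_rhs => rw [p.as_sum, Finset.mul_sum]
  apply Finset.sum_congr rfl
  intro d hd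
  have hdeg : d 0 + d 1 = n := homog_deg hp (mem_support_iff.mp hd)
  rw [aeval_monomial, Finsupp.prod_fintype _ _ (fun i => pow_zero _), Fin.prod_univ_two]
  rw [show (monomial d) (coeff d p) = C (coeff d p) * (X 0 ^ d 0 * X 1 ^ d 1) by
    rw [monomial_eq, Finsupp.prod_fintype _ _ (fun i => pow_zero _), Fin.prod_univ_two]]
  show algebraMap ℚ A (coeff d p) * ((-X 0) ^ d 0 * (-X 1) ^ d 1) = _
  rw [neg_pow (X 0 : A), neg_pow (X 1 : A)]
  have hm : ((-1 : A)) ^ (d 0) * (-1 : A) ^ (d 1) = (-1 : A) ^ n := by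
    rw [← pow_add, hdeg]
  rw [algebraMap_eq]
  linear_combination (C (coeff d p) * X 0 ^ d 0 * X 1 ^ d 1 : A) * hm

lemma substU_eq (p : A) : substS (substT p) = aeval vU p := by
  rw [substT_apply, substS_apply, ← AlgHom.comp_apply]
  congr 1
  apply MvPolynomial.algHom_ext
  intro i
  fin_cases i <;> simp [vU] <;> ring

lemma substU_sq (p : A) : aeval vU (aeval vU p) = aeval vU2 p := by
  rw [← AlgHom.comp_apply]
  congr 1
  apply MvPolynomial.algHom_ext
  intro i
  fin_cases i <;> simp [vU, vU2] <;> ring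

lemma substU_cube (p : A) : aeval vU (aeval vU2 p) = aeval vNeg p := by
  rw [← AlgHom.comp_apply]
  congr 1
  apply MvPolynomial.algHom_ext
  intro i
  fin_cases i <;> simp [vU, vU2, vNeg] <;> ring

/-! ### the two spaces -/

noncomputable def Wsp (n : ℕ) : Submodule ℚ A :=
  homogeneousSubmodule (Fin 2) ℚ n ⊓
    LinearMap.ker (LinearMap.id + substT) ⊓
    LinearMap.ker (LinearMap.id + substS)

noncomputable def Isp (n : ℕ) : Submodule ℚ A :=
  homogeneousSubmodule (Fin 2) ℚ n ⊓
    LinearMap.ker (LinearMap.id - substT) ⊓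
    LinearMap.ker (LinearMap.id - substS)

lemma mem_Wsp {n : ℕ} {p : A} :
    p ∈ Wsp n ↔ p.IsHomogeneous n ∧ substT p = -p ∧ substS p = -p := by
  have key : ∀ q : A, p + q = 0 ↔ q = -p := fun q =>
    ⟨fun h => (neg_eq_of_add_eq_zero_right h).symm, fun h => by rw [h, add_neg_cancel]⟩
  simp only [Wsp, Submodule.mem_inf, LinearMap.mem_ker, LinearMap.add_apply,
    LinearMap.id_apply, mem_homogeneousSubmodule, and_assoc, key]

lemma mem_Isp {n : ℕ} {p : A} :
    p ∈ Isp n ↔ p.IsHomogeneous n ∧ substT p = p ∧ substS p = p := by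
  have key : ∀ q : A, p - q = 0 ↔ q = p := fun q =>
    ⟨fun h => (sub_eq_zero.mp h).symm, fun h => by rw [h, sub_self]⟩
  simp only [Isp, Submodule.mem_inf, LinearMap.mem_ker, LinearMap.sub_apply,
    LinearMap.id_apply, mem_homogeneousSubmodule, and_assoc, key]

lemma fd_homogeneousSubmodule (n : ℕ) :
    FiniteDimensional ℚ (homogeneousSubmodule (Fin 2) ℚ n) := by
  apply Submodule.finiteDimensional_of_le (S₂ := restrictTotalDegree (Fin 2) ℚ n)
  intro p hp
  rw [mem_restrictTotalDegree]
  exact (mem_homogeneousSubmodule _ _).mp hp |>.totalDegree_le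

lemma fd_Wsp (n : ℕ) : FiniteDimensional ℚ (Wsp n) := by
  haveI := fd_homogeneousSubmodule n
  exact Submodule.finiteDimensional_of_le (le_trans inf_le_left inf_le_left)

lemma fd_Isp (n : ℕ) : FiniteDimensional ℚ (Isp n) := by
  haveI := fd_homogeneousSubmodule n
  exact Submodule.finiteDimensional_of_le (le_trans inf_le_left inf_le_left)

/-! ### divisibility cascade for W -/

lemma Wsp_J_dvd {n : ℕ} {p : A} (hh : p.IsHomogeneous n)
    (hT : substT p = -p) (hS : substS p = -p) : ∃ g : A, p = J * g := by
  -- X 1 divides p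
  have hρ : ρ p = 0 := rho_of_anti hT
  have hU : aeval vU p = p := by
    rw [← substU_eq, hT, map_neg, hS, neg_neg]
  have hd1 : lin 0 1 ∣ p := by rw [lin_zero_one]; exact X1_dvd_of_rho hh hρ
  have hd2 : lin 1 0 ∣ p := by
    rw [lin_one_zero]
    have := map_dvd (aeval vU : A →ₐ[ℚ] A) (lin_zero_one ▸ hd1)
    rw [hU] at this
    have hX : aeval vU (X 1 : A) = -X 0 := by simp [vU]
    rw [hX, neg_dvd] at this
    exact this
  have hd3 : lin 1 1 ∣ p := by
    rw [lin_one_one]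
    have := map_dvd (aeval vU : A →ₐ[ℚ] A) (lin_one_zero ▸ hd2)
    rw [hU] at this
    have hX : aeval vU (X 0 : A) = X 0 + X 1 := by simp [vU]
    rwa [hX] at this
  have hd4 : lin 1 (-1) ∣ p := by
    rw [lin_one_negone]
    have h2p := diag_dvd_sub p
    rw [hS, sub_neg_eq_add] at h2p
    have : p = C ((2:ℚ)⁻¹) * (p + p) := by
      rw [show (p + p : A) = C (2:ℚ) * p by rw [show (C (2:ℚ) : A) = 2 from map_ofNat C 2]; ring]
      rw [← mul_assoc, ← C_mul]
      norm_num
    rw [this]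
    exact Dvd.dvd.mul_left h2p _
  have hd5 : lin 1 2 ∣ p := by
    have := substT_dvd hd4
    rw [substT_lin, hT, dvd_neg] at this
    norm_num at this
    exact this
  have hd6 : lin 2 1 ∣ p := by
    have := substS_dvd hd5
    rw [substS_lin, hS, dvd_neg] at this
    exact this
  -- extract the six primes
  obtain ⟨g1, e1⟩ := hd1
  obtain ⟨g2, e2⟩ := step (prime_lin 1 0 one_ne_zero) e1 hd2 (lin_not_dvd (by norm_num))
  obtain ⟨g3, e3⟩ := step (prime_lin 1 1 one_ne_zero) e2 hd3
    (not_dvd_mul (prime_lin 1 1 one_ne_zero) (lin_not_dvd (by norm_num))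
      (lin_not_dvd (by norm_num)))
  obtain ⟨g4, e4⟩ := step (prime_lin 1 (-1) one_ne_zero) e3 hd4
    (not_dvd_mul (prime_lin 1 (-1) one_ne_zero)
      (not_dvd_mul (prime_lin 1 (-1) one_ne_zero) (lin_not_dvd (by norm_num))
        (lin_not_dvd (by norm_num)))
      (lin_not_dvd (by norm_num)))
  obtain ⟨g5, e5⟩ := step (prime_lin 2 1 two_ne_zero) e4 hd6
    (not_dvd_mul (prime_lin 2 1 two_ne_zero)
      (not_dvd_mul (prime_lin 2 1 two_ne_zero)
        (not_dvd_mul (prime_lin 2 1 two_ne_zero) (lin_not_dvd (by norm_num))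
          (lin_not_dvd (by norm_num)))
        (lin_not_dvd (by norm_num)))
      (lin_not_dvd (by norm_num)))
  obtain ⟨g6, e6⟩ := step (prime_lin 1 2 one_ne_zero) e5 hd5
    (not_dvd_mul (prime_lin 1 2 one_ne_zero)
      (not_dvd_mul (prime_lin 1 2 one_ne_zero)
        (not_dvd_mul (prime_lin 1 2 one_ne_zero)
          (not_dvd_mul (prime_lin 1 2 one_ne_zero) (lin_not_dvd (by norm_num))
            (lin_not_dvd (by norm_num)))
          (lin_not_dvd (by norm_num)))
        (lin_not_dvd (by norm_num)))
      (lin_not_dvd (by norm_num)))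
  exact ⟨g6, by rw [e6, J]; try ring⟩

/-! ### divisibility cascade for I -/

lemma Isp_f6_factor {m : ℕ} {q : A} (hh : q.IsHomogeneous m) (hT : substT q = q)
    (hS : substS q = q) (hc : coeff (Finsupp.single 0 m) q = 0) : ∃ g : A, q = f6 * g := by
  rcases eq_or_ne q 0 with rfl | hq0
  · exact ⟨0, by rw [mul_zero]⟩
  have hX1 : (X 1 : A) ∣ q := X1_dvd hh hc
  obtain ⟨h, eh⟩ := hX1
  have hm1 : 1 ≤ m := by
    by_contra hlt
    exact hq0 (factor_zero (isHomogeneous_X _ _) prime_X1.ne_zero hh eh (by omega))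
  have hhomh : h.IsHomogeneous (m - 1) :=
    factor_homog (isHomogeneous_X _ _) prime_X1.ne_zero hh eh hm1
  have hTX1 : substT (X 1 : A) = -X 1 := by rw [substT_apply]; simp
  have hTh : substT h = -h := by
    have hq : substT (X 1 * h) = X 1 * h := by rw [← eh, hT, eh]
    rw [substT_mul, hTX1] at hq
    have h0 : (X 1 : A) * (substT h + h) = 0 := by linear_combination -hq
    rcases mul_eq_zero.mp h0 with hX | hX
    · exact absurd hX prime_X1.ne_zero
    · exact eq_neg_of_add_eq_zero_left hX
  have hX1h : (X 1 : A) ∣ h := X1_dvd_of_rho hhomh (rho_of_anti hTh)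
  obtain ⟨h2, eh2⟩ := hX1h
  have e1 : q = lin 0 1 ^ 2 * h2 := by rw [eh, eh2, lin_zero_one]; ring
  have hsq10 : lin 1 0 ^ 2 ∣ q := by
    have hdq : lin 0 1 ^ 2 ∣ q := ⟨h2, e1⟩
    have := substS_dvd hdq
    rw [substS_pow, substS_lin, hS] at this
    exact this
  have hsq11 : lin 1 1 ^ 2 ∣ q := by
    have := substT_dvd hsq10
    rw [substT_pow, substT_lin, hT] at this
    norm_num at this
    exact this
  obtain ⟨g2, e2⟩ := step_sq (prime_lin 1 0 one_ne_zero) e1 hsq10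
    (not_dvd_sq (prime_lin 1 0 one_ne_zero) (lin_not_dvd (by norm_num)))
  obtain ⟨g3, e3⟩ := step_sq (prime_lin 1 1 one_ne_zero) e2 hsq11
    (not_dvd_mul (prime_lin 1 1 one_ne_zero)
      (not_dvd_sq (prime_lin 1 1 one_ne_zero) (lin_not_dvd (by norm_num)))
      (not_dvd_sq (prime_lin 1 1 one_ne_zero) (lin_not_dvd (by norm_num))))
  exact ⟨g3, by rw [e3, f6]; ring⟩

/-! ### the coefficient functional -/

noncomputable def cf (m : ℕ) : A →ₗ[ℚ] ℚ where
  toFun p := coeff (Finsupp.single 0 m) p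
  map_add' p q := coeff_add _ _ _
  map_smul' c p := coeff_smul _ _ _

lemma cf_apply (m : ℕ) (p : A) : cf m p = coeff (Finsupp.single 0 m) p := rfl

lemma f2_pow_mem {m : ℕ} (hm : Even m) : f2 ^ (m / 2) ∈ Isp m := by
  rw [mem_Isp]
  refine ⟨?_, ?_, ?_⟩
  · have := f2_isHomogeneous.pow (m / 2)
    rwa [show 2 * (m / 2) = m by obtain ⟨k, hk⟩ := hm; omega] at this
  · rw [substT_pow, substT_f2]
  · rw [substS_pow, substS_f2]

lemma f2_pow_homog {m : ℕ} (hm : Even m) : (f2 ^ (m / 2)).IsHomogeneous m := by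
  have := f2_isHomogeneous.pow (m / 2)
  rwa [show 2 * (m / 2) = m by obtain ⟨k, hk⟩ := hm; omega] at this

lemma cf_f2_pow {m : ℕ} (hm : Even m) : cf m (f2 ^ (m / 2)) = 1 := by
  have hb := restrict_homog (f2_pow_homog hm)
  have hl : ρ (f2 ^ (m / 2)) = Polynomial.X ^ m := by
    rw [map_pow, rho_f2, ← pow_mul, show 2 * (m / 2) = m by obtain ⟨k, hk⟩ := hm; omega]
  rw [hl] at hb
  have := congrArg (fun q => Polynomial.coeff q m) hb
  simpa [cf_apply] using this.symm

/-! ### rank computations -/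

lemma range_top {m : ℕ} (hm : Even m) :
    LinearMap.range ((cf m).comp (Isp m).subtype) = ⊤ := by
  rw [LinearMap.range_eq_top]
  intro c
  refine ⟨c • ⟨f2 ^ (m / 2), f2_pow_mem hm⟩, ?_⟩
  simp [cf_f2_pow hm]

lemma ker_phi_bot {m : ℕ} (hm : m < 6) :
    LinearMap.ker ((cf m).comp (Isp m).subtype) = ⊥ := by
  rw [Submodule.eq_bot_iff]
  intro x hx
  rw [LinearMap.mem_ker] at hx
  obtain ⟨q, hq⟩ := x
  rw [mem_Isp] at hq
  obtain ⟨g, hg⟩ := Isp_f6_factor hq.1 hq.2.1 hq.2.2 hx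
  have : q = 0 := factor_zero f6_isHomogeneous f6_ne_zero hq.1 hg hm
  exact Subtype.ext this

lemma ker_phi_equiv {m : ℕ} (hm : 6 ≤ m) :
    Nonempty ((Isp (m - 6)) ≃ₗ[ℚ] (LinearMap.ker ((cf m).comp (Isp m).subtype))) := by
  have hmem : ∀ g : Isp (m - 6), f6 * (g : A) ∈ Isp m := by
    intro ⟨g, hg⟩
    rw [mem_Isp] at hg ⊢
    refine ⟨?_, ?_, ?_⟩
    · have := f6_isHomogeneous.mul hg.1
      rwa [show 6 + (m - 6) = m by omega] at this
    · rw [substT_mul, substT_f6, hg.2.1]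
    · rw [substS_mul, substS_f6, hg.2.2]
  have hker : ∀ g : Isp (m - 6),
      ((cf m).comp (Isp m).subtype) ⟨f6 * (g : A), hmem g⟩ = 0 := by
    intro ⟨g, hg⟩
    rw [mem_Isp] at hg
    have hhom : (f6 * g).IsHomogeneous m := by
      have := f6_isHomogeneous.mul hg.1
      rwa [show 6 + (m - 6) = m by omega] at this
    have hρ : ρ (f6 * g) = 0 := by rw [map_mul, rho_f6, zero_mul]
    exact coeff_single_of_rho hhom hρ
  refine ⟨LinearEquiv.ofBijective
    ({ toFun := fun g => ⟨⟨f6 * (g : A), hmem g⟩, LinearMap.mem_ker.mpr (hker g)⟩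
       map_add' := by
         intro g g'
         apply Subtype.ext
         apply Subtype.ext
         show f6 * ((g : A) + (g' : A)) = f6 * (g : A) + f6 * (g' : A)
         ring
       map_smul' := by
         intro c g
         apply Subtype.ext
         apply Subtype.ext
         show f6 * (c • (g : A)) = c • (f6 * (g : A))
         rw [smul_eq_C_mul, smul_eq_C_mul]
         try ring } :
      Isp (m - 6) →ₗ[ℚ] LinearMap.ker ((cf m).comp (Isp m).subtype)) ⟨?_, ?_⟩⟩
  · intro g g' h
    apply Subtype.ext
    have h1 : f6 * (g : A) = f6 * (g' : A) := congrArg (fun x => (x.1.1 : A)) h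
    exact mul_left_cancel₀ f6_ne_zero h1
  · rintro ⟨⟨q, hq⟩, hk⟩
    rw [LinearMap.mem_ker] at hk
    have hq' := mem_Isp.mp hq
    obtain ⟨g, hg⟩ := Isp_f6_factor hq'.1 hq'.2.1 hq'.2.2 hk
    have hghom : g.IsHomogeneous (m - 6) :=
      factor_homog f6_isHomogeneous f6_ne_zero hq'.1 hg hm
    have hTg : substT g = g := by
      have : substT q = q := hq'.2.1
      rw [hg, substT_mul, substT_f6] at this
      have h0 : f6 * (substT g - g) = 0 := by linear_combination this
      rcases mul_eq_zero.mp h0 with h | h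
      · exact absurd h f6_ne_zero
      · linear_combination h
    have hSg : substS g = g := by
      have : substS q = q := hq'.2.2
      rw [hg, substS_mul, substS_f6] at this
      have h0 : f6 * (substS g - g) = 0 := by linear_combination this
      rcases mul_eq_zero.mp h0 with h | h
      · exact absurd h f6_ne_zero
      · linear_combination h
    refine ⟨⟨g, mem_Isp.mpr ⟨hghom, hTg, hSg⟩⟩, ?_⟩
    apply Subtype.ext
    apply Subtype.ext
    exact hg.symm

lemma finrank_Isp_lt6 {m : ℕ} (hm : Even m) (h6 : m < 6) :
    Module.finrank ℚ (Isp m) = 1 := by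
  haveI := fd_Isp m
  have h := LinearMap.finrank_range_add_finrank_ker ((cf m).comp (Isp m).subtype)
  rw [range_top hm, ker_phi_bot h6, finrank_top, finrank_bot] at h
  simp only [Module.finrank_self] at h
  omega

lemma finrank_Isp_rec {m : ℕ} (hm : Even m) (h6 : 6 ≤ m) :
    Module.finrank ℚ (Isp m) = Module.finrank ℚ (Isp (m - 6)) + 1 := by
  haveI := fd_Isp m
  have h := LinearMap.finrank_range_add_finrank_ker ((cf m).comp (Isp m).subtype)
  rw [range_top hm, finrank_top] at h
  obtain ⟨e⟩ := ker_phi_equiv h6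
  have he : Module.finrank ℚ (Isp (m - 6)) =
      Module.finrank ℚ (LinearMap.ker ((cf m).comp (Isp m).subtype)) :=
    LinearEquiv.finrank_eq e
  rw [← he] at h
  simp only [Module.finrank_self] at h
  omega

lemma finrank_Isp {m : ℕ} (hm : Even m) : Module.finrank ℚ (Isp m) = m / 6 + 1 := by
  induction m using Nat.strong_induction_on with
  | _ m ih =>
    rcases lt_or_ge m 6 with h6 | h6
    · rw [finrank_Isp_lt6 hm h6]
      omega
    · rw [finrank_Isp_rec hm h6, ih (m - 6) (by omega)
        (by rcases hm with ⟨k, hk⟩; exact ⟨k - 3, by omega⟩)]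
      omega

/-! ### W side -/

lemma Wsp_bot_lt6 {n : ℕ} (hn : n < 6) : Wsp n = ⊥ := by
  rw [Submodule.eq_bot_iff]
  intro p hp
  rw [mem_Wsp] at hp
  obtain ⟨g, hg⟩ := Wsp_J_dvd hp.1 hp.2.1 hp.2.2
  exact factor_zero J_isHomogeneous J_ne_zero hp.1 hg hn

lemma Wsp_equiv {n : ℕ} (hn : 6 ≤ n) :
    Nonempty ((Isp (n - 6)) ≃ₗ[ℚ] (Wsp n)) := by
  have hmem : ∀ g : Isp (n - 6), J * (g : A) ∈ Wsp n := by
    intro ⟨g, hg⟩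
    rw [mem_Isp] at hg
    rw [mem_Wsp]
    refine ⟨?_, ?_, ?_⟩
    · have := J_isHomogeneous.mul hg.1
      rwa [show 6 + (n - 6) = n by omega] at this
    · rw [substT_mul, substT_J, hg.2.1]; ring
    · rw [substS_mul, substS_J, hg.2.2]; ring
  refine ⟨LinearEquiv.ofBijective
    ({ toFun := fun g => ⟨J * (g : A), hmem g⟩
       map_add' := by
         intro g g'
         apply Subtype.ext
         show J * ((g : A) + (g' : A)) = J * (g : A) + J * (g' : A)
         ring
       map_smul' := by
         intro c g
         apply Subtype.ext
         show J * (c • (g : A)) = c • (J * (g : A))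
         rw [smul_eq_C_mul, smul_eq_C_mul]
         try ring } :
      Isp (n - 6) →ₗ[ℚ] Wsp n) ⟨?_, ?_⟩⟩
  · intro g g' h
    apply Subtype.ext
    have h1 : J * (g : A) = J * (g' : A) := congrArg (fun x => (x.1 : A)) h
    exact mul_left_cancel₀ J_ne_zero h1
  · rintro ⟨p, hp⟩
    have hp' := mem_Wsp.mp hp
    obtain ⟨g, hg⟩ := Wsp_J_dvd hp'.1 hp'.2.1 hp'.2.2
    have hghom : g.IsHomogeneous (n - 6) :=
      factor_homog J_isHomogeneous J_ne_zero hp'.1 hg hn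
    have hTg : substT g = g := by
      have : substT p = -p := hp'.2.1
      rw [hg, substT_mul, substT_J] at this
      have h0 : J * (substT g - g) = 0 := by linear_combination -this
      rcases mul_eq_zero.mp h0 with h | h
      · exact absurd h J_ne_zero
      · linear_combination h
    have hSg : substS g = g := by
      have : substS p = -p := hp'.2.2
      rw [hg, substS_mul, substS_J] at this
      have h0 : J * (substS g - g) = 0 := by linear_combination -this
      rcases mul_eq_zero.mp h0 with h | h
      · exact absurd h J_ne_zero
      · linear_combination h
    exact ⟨⟨g, mem_Isp.mpr ⟨hghom, hTg, hSg⟩⟩, Subtype.ext hg.symm⟩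

lemma Wsp_bot_odd {n : ℕ} (hn : Odd n) : Wsp n = ⊥ := by
  rw [Submodule.eq_bot_iff]
  intro p hp
  rw [mem_Wsp] at hp
  obtain ⟨hh, hT, hS⟩ := hp
  have hU : aeval vU p = p := by
    rw [← substU_eq, hT, map_neg, hS, neg_neg]
  have hcube : aeval vNeg p = p := by
    rw [← substU_cube, ← substU_sq, hU, hU, hU]
  rw [antipode_homog hh, hn.neg_one_pow] at hcube
  have hpp : p + p = 0 := by linear_combination -hcube
  have hp0 : p = C ((2:ℚ)⁻¹) * (p + p) := by
    rw [show (p + p : A) = C (2:ℚ) * p from by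
      rw [show (C (2:ℚ) : A) = 2 from map_ofNat C 2]; ring]
    rw [← mul_assoc, ← C_mul]
    norm_num
  rw [hp0, hpp, mul_zero]

theorem dim_ker_n' (n : ℕ) :
    Module.finrank ℚ (Wsp n) = if Odd n then 0 else n / 6 := by
  rcases Nat.even_or_odd n with he | ho
  · rw [if_neg (by simpa using he)]
    rcases lt_or_ge n 6 with h6 | h6
    · rw [Wsp_bot_lt6 h6, finrank_bot]
      omega
    · obtain ⟨e⟩ := Wsp_equiv h6
      rw [← e.finrank_eq, finrank_Isp (by rcases he with ⟨k, hk⟩; exact ⟨k - 3, by omega⟩)]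
      omega
  · rw [if_pos ho, Wsp_bot_odd ho, finrank_bot]

end DimKer

/-- The dimension of the space of homogeneous polynomials `p(v,w)` of degree `n`
satisfying `p(v,w) = -p(v+w,-w)` and `p(v,w) = -p(w,v)` is `0` for odd `n` and
`⌊n/6⌋` for even `n`. -/
theorem dim_ker_n (n : ℕ) :
    Module.finrank ℚ
      ↥(homogeneousSubmodule (Fin 2) ℚ n ⊓
          LinearMap.ker (LinearMap.id + substT) ⊓
          LinearMap.ker (LinearMap.id + substS)) =
      if Odd n then 0 else n / 6 :=
  DimKer.dim_ker_n' n
end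

section
/- Let l ≥ 2 be an integer and let q ∈ ℂ be a primitive l-th root of unity. If a homogeneous polynomial p(v,w) in two variables over ℂ satisfies both functional equations p(v,w) = -q·p(v+w, (q-1)v - w) and p(v,w) = -p(w,v), then p = 0. -/
open MvPolynomial

private lemma eval_aeval_comp (p : MvPolynomial (Fin 2) ℂ)
    (g : Fin 2 → MvPolynomial (Fin 2) ℂ) (x : Fin 2 → ℂ) :
    eval x (aeval g p) = eval (fun i => eval x (g i)) p := by
  induction p using MvPolynomial.induction_on with
  | C a => simp
  | add p1 p2 ih1 ih2 => simp only [map_add, ih1, ih2]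
  | mul_X p1 i ih => simp only [map_mul, aeval_X, eval_X, ih, eval_mul]

private lemma polyeval_aeval_comp (p : MvPolynomial (Fin 2) ℂ)
    (g : Fin 2 → Polynomial ℂ) (t : ℂ) :
    Polynomial.eval t (aeval g p) = eval (fun i => Polynomial.eval t (g i)) p := by
  induction p using MvPolynomial.induction_on with
  | C a => simp
  | add p1 p2 ih1 ih2 => simp only [map_add, ih1, ih2, Polynomial.eval_add]
  | mul_X p1 i ih => simp only [map_mul, aeval_X, eval_X, ih, eval_mul, Polynomial.eval_mul]

private lemma eval_smul_homog {p : MvPolynomial (Fin 2) ℂ} {n : ℕ}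
    (hp : p.IsHomogeneous n) (c : ℂ) (x : Fin 2 → ℂ) :
    eval (fun i => c * x i) p = c ^ n * eval x p := by
  rw [eval_eq', eval_eq', Finset.mul_sum]
  apply Finset.sum_congr rfl
  intro d hd
  have hdn : d 0 + d 1 = n := by
    have h := hp (mem_support_iff.mp hd)
    rw [Finsupp.weight_apply, Finsupp.sum_fintype] at h
    · simpa [Fin.sum_univ_two] using h
    · intro; simp
  rw [Fin.prod_univ_two, Fin.prod_univ_two, mul_pow, mul_pow, ← hdn, pow_add]
  ring

/-- For `q` a primitive `l`-th root of unity with `l ≥ 2`, no nonzero homogeneous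
polynomial `p(v,w)` over `ℂ` satisfies both `p(v,w) = -q·p(v+w, (q-1)v-w)` and
`p(v,w) = -p(w,v)`. -/
theorem qker_poly_trivial (l : ℕ) (hl : 2 ≤ l) (q : ℂ) (hq : IsPrimitiveRoot q l)
    (n : ℕ) (p : MvPolynomial (Fin 2) ℂ) (hp : p.IsHomogeneous n)
    (h1 : p = -(C q * aeval ![X 0 + X 1, C (q - 1) * X 0 - X 1] p))
    (h2 : p = -(aeval ![X 1, X 0] p)) :
    p = 0 := by
  have hql : q ^ l = 1 := hq.pow_eq_one
  have hq1 : q ≠ 1 := hq.ne_one (by omega)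
  have hqnorm : ‖q‖ = 1 := Complex.norm_eq_one_of_pow_eq_one hql (by omega)
  have hq0 : q ≠ 0 := by
    intro h; rw [h, zero_pow (by omega : l ≠ 0)] at hql; exact zero_ne_one hql
  have hq4 : q ≠ 4 := by
    intro h; rw [h] at hqnorm; norm_num at hqnorm
  -- the two eigenvalues μ, ν of the substitution matrix
  have hs : ((q ^ 2 - 4 * q) ^ (((2 : ℕ) : ℂ))⁻¹) ^ (2 : ℕ) = q ^ 2 - 4 * q :=
    Complex.cpow_nat_inv_pow (q ^ 2 - 4 * q) two_ne_zero
  obtain ⟨μ, ν, hμ, hν, hprod, hsum⟩ :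
      ∃ μ ν : ℂ, μ ^ 2 - q * μ + q = 0 ∧ ν ^ 2 - q * ν + q = 0 ∧ μ * ν = q ∧ μ + ν = q := by
    refine ⟨(q + (q ^ 2 - 4 * q) ^ (((2 : ℕ) : ℂ))⁻¹) / 2,
      (q - (q ^ 2 - 4 * q) ^ (((2 : ℕ) : ℂ))⁻¹) / 2, ?_, ?_, ?_, ?_⟩
    · linear_combination hs / 4
    · linear_combination hs / 4
    · linear_combination -hs / 4
    · ring
  have hμ0 : μ ≠ 0 := by intro h; rw [h, zero_mul] at hprod; exact hq0 hprod.symm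
  have hν0 : ν ≠ 0 := by intro h; rw [h, mul_zero] at hprod; exact hq0 hprod.symm
  have hμ2 : μ ≠ 2 := by intro h; apply hq4; rw [h] at hμ; linear_combination -hμ
  have hν2 : ν ≠ 2 := by intro h; apply hq4; rw [h] at hν; linear_combination -hν
  have hμν : μ ≠ ν := by
    intro h
    have e1 : μ ^ 2 = q := by rw [← h] at hprod; linear_combination hprod
    have e2 : 2 * μ = q := by rw [← h] at hsum; linear_combination hsum
    have e3 : μ * (μ - 2) = 0 := by linear_combination e1 - e2
    rcases mul_eq_zero.mp e3 with h' | h'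
    · exact hμ0 h'
    · exact hμ2 (by linear_combination h')
  -- key: powers of μ and ν are never equal
  have key : ∀ d : ℕ, d ≠ 0 → μ ^ d ≠ ν ^ d := by
    intro d hd h
    have hnormeq : ‖μ‖ = ‖ν‖ := by
      have h' := congrArg Norm.norm h
      rw [norm_pow, norm_pow] at h'
      exact (pow_left_inj₀ (norm_nonneg _) (norm_nonneg _) hd).mp h'
    have hnormμ : ‖μ‖ = 1 := by
      have h1' : ‖μ‖ * ‖ν‖ = 1 := by rw [← norm_mul, hprod, hqnorm]
      rw [← hnormeq] at h1'
      nlinarith [norm_nonneg μ]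
    have hnormν : ‖ν‖ = 1 := by rw [← hnormeq]; exact hnormμ
    have hconj : (starRingEnd ℂ) q = 1 := by
      rw [← hsum, map_add, ← Complex.inv_eq_conj hnormμ, ← Complex.inv_eq_conj hnormν]
      field_simp
      linear_combination hsum - hprod
    have : q = 1 := by
      have h'' := congrArg (starRingEnd ℂ) hconj
      rwa [Complex.conj_conj, map_one] at h''
    exact hq1 this
  have pow_eq : ∀ k j : ℕ, μ ^ k * ν ^ j = μ ^ j * ν ^ k → k = j := by
    intro k j h
    rcases lt_trichotomy k j with hkj | hkj | hkj
    · exfalso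
      have hj : j = k + (j - k) := by omega
      rw [hj, pow_add, pow_add] at h
      exact key (j - k) (by omega)
        (mul_left_cancel₀ (mul_ne_zero (pow_ne_zero k hμ0) (pow_ne_zero k hν0))
          (by linear_combination -h))
    · exact hkj
    · exfalso
      have hk : k = j + (k - j) := by omega
      rw [hk, pow_add, pow_add] at h
      exact key (k - j) (by omega)
        (mul_left_cancel₀ (mul_ne_zero (pow_ne_zero j hμ0) (pow_ne_zero j hν0))
          (by linear_combination h))
  -- the coefficients of the initial vector (1,1) in the eigenbasis
  have hμνne : μ - ν ≠ 0 := sub_ne_zero.mpr hμν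
  obtain ⟨c1, c2, hc1, hc2, h10, h11⟩ :
      ∃ c1 c2 : ℂ, c1 ≠ 0 ∧ c2 ≠ 0 ∧ c1 + c2 = 1 ∧ c1 * μ + c2 * ν = 2 := by
    refine ⟨(2 - ν) / (μ - ν), (μ - 2) / (μ - ν), ?_, ?_, ?_, ?_⟩
    · exact div_ne_zero (fun h => hν2 (by linear_combination -h)) hμνne
    · exact div_ne_zero (fun h => hμ2 (by linear_combination h)) hμνne
    · field_simp; ring
    · field_simp; ring
  -- step of the recursion
  have step : ∀ v w : ℂ, eval ![v, w] p = 0 → eval ![w + v, (q - 1) * w - v] p = 0 := by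
    intro v w h0
    have hswap : eval ![w, v] p = 0 := by
      have hh := congrArg (eval ![v, w]) h2
      rw [map_neg, eval_aeval_comp] at hh
      have hvec : (fun i => eval ![v, w] (![X 1, X 0] i)) = ![w, v] := by
        funext i; fin_cases i <;> simp
      rw [hvec, h0] at hh
      exact neg_eq_zero.mp hh.symm
    have hh := congrArg (eval ![w, v]) h1
    rw [map_neg, eval_mul, eval_C, eval_aeval_comp] at hh
    have hvec : (fun i => eval ![w, v] (![X 0 + X 1, C (q - 1) * X 0 - X 1] i))
        = ![w + v, (q - 1) * w - v] := by
      funext i; fin_cases i <;> simp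
    rw [hvec, hswap] at hh
    rcases mul_eq_zero.mp (neg_eq_zero.mp hh.symm) with h' | h'
    · exact absurd h' hq0
    · exact h'
  -- base point (1,1)
  have base : eval ![(1 : ℂ), 1] p = 0 := by
    have hh := congrArg (eval ![(1 : ℂ), 1]) h2
    rw [map_neg, eval_aeval_comp] at hh
    have hvec : (fun i => eval ![(1 : ℂ), 1] (![X 1, X 0] i)) = ![(1 : ℂ), 1] := by
      funext i; fin_cases i <;> simp
    rw [hvec] at hh
    exact add_self_eq_zero.mp (by linear_combination hh)
  -- the orbit of (1,1)
  have vanish : ∀ k : ℕ,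
      eval ![c1 * μ ^ k + c2 * ν ^ k,
             c1 * μ ^ k * (μ - 1) + c2 * ν ^ k * (ν - 1)] p = 0 := by
    intro k
    induction k with
    | zero =>
      rw [show c1 * μ ^ 0 + c2 * ν ^ 0 = (1 : ℂ) by
            simp only [pow_zero, mul_one]; linear_combination h10,
          show c1 * μ ^ 0 * (μ - 1) + c2 * ν ^ 0 * (ν - 1) = (1 : ℂ) by
            simp only [pow_zero, mul_one]; linear_combination h11 - h10]
      exact base
    | succ k ih =>
      have hstep := step _ _ ih
      rw [show c1 * μ ^ (k + 1) + c2 * ν ^ (k + 1)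
            = c1 * μ ^ k * (μ - 1) + c2 * ν ^ k * (ν - 1) + (c1 * μ ^ k + c2 * ν ^ k) by
            ring,
          show c1 * μ ^ (k + 1) * (μ - 1) + c2 * ν ^ (k + 1) * (ν - 1)
            = (q - 1) * (c1 * μ ^ k * (μ - 1) + c2 * ν ^ k * (ν - 1))
              - (c1 * μ ^ k + c2 * ν ^ k) by
            linear_combination (c1 * μ ^ k) * hμ + (c2 * ν ^ k) * hν]
      exact hstep
  -- the dehomogenization of p
  set F : Polynomial ℂ := aeval ![1, Polynomial.X] p with hFdef
  have hFval : ∀ t : ℂ, Polynomial.eval t F = eval ![1, t] p := by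
    intro t
    rw [hFdef, polyeval_aeval_comp]
    have hvec : (fun i => Polynomial.eval t (![1, Polynomial.X] i)) = ![(1 : ℂ), t] := by
      funext i; fin_cases i <;> simp
    rw [hvec]
  have hF0 : F = 0 := by
    by_contra hF
    have hfin := Polynomial.finite_setOf_isRoot hF
    set a : ℕ → ℂ := fun k => c1 * μ ^ k + c2 * ν ^ k with ha
    set b : ℕ → ℂ := fun k => c1 * μ ^ k * (μ - 1) + c2 * ν ^ k * (ν - 1) with hb
    have hBadSub : ∀ k j : ℕ, a k = 0 → a j = 0 → k = j := by
      intro k j hk hj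
      apply pow_eq
      have hz : c1 * (μ ^ k * ν ^ j - μ ^ j * ν ^ k) = 0 := by
        simp only [ha] at hk hj
        linear_combination ν ^ j * hk - ν ^ k * hj
      rcases mul_eq_zero.mp hz with h' | h'
      · exact absurd h' hc1
      · linear_combination h'
    have hInj : Set.InjOn (fun k => b k / a k) {k | a k ≠ 0} := by
      intro k hk j hj hkj
      simp only [Set.mem_setOf_eq] at hk hj
      simp only at hkj
      have hcross : b k * a j = b j * a k := (div_eq_div_iff hk hj).mp hkj
      apply pow_eq
      have hz : (μ - ν) * (c1 * c2) * (μ ^ k * ν ^ j - μ ^ j * ν ^ k) = 0 := by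
        simp only [ha, hb] at hcross
        linear_combination hcross
      rcases mul_eq_zero.mp hz with h' | h'
      · exact absurd h' (mul_ne_zero hμνne (mul_ne_zero hc1 hc2))
      · linear_combination h'
    have himg : (fun k => b k / a k) '' {k | a k ≠ 0} ⊆ {x | F.IsRoot x} := by
      rintro x ⟨k, hk, rfl⟩
      simp only [Set.mem_setOf_eq] at hk ⊢
      have hvec : (fun i => (a k) * (![1, b k / a k] : Fin 2 → ℂ) i) = ![a k, b k] := by
        funext i; fin_cases i <;> simp [mul_div_cancel₀ _ hk]
      have hsm := eval_smul_homog hp (a k) ![1, b k / a k]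
      rw [hvec, vanish k] at hsm
      have : eval ![1, b k / a k] p = 0 := by
        rcases mul_eq_zero.mp hsm.symm with h' | h'
        · exact absurd h' (pow_ne_zero n hk)
        · exact h'
      rw [Polynomial.IsRoot, hFval]
      exact this
    have hGoodFin : {k | a k ≠ 0}.Finite :=
      Set.Finite.of_finite_image (hfin.subset himg) hInj
    have hBadFin : {k | a k = 0}.Finite := by
      apply Set.Subsingleton.finite
      intro k hk j hj
      exact hBadSub k j hk hj
    have huniv : (Set.univ : Set ℕ) ⊆ {k | a k ≠ 0} ∪ {k | a k = 0} := by
      intro k _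
      by_cases h : a k = 0
      · exact Or.inr h
      · exact Or.inl h
    exact Set.infinite_univ ((hGoodFin.union hBadFin).subset huniv)
  -- conclude
  have hallv : ∀ v w : ℂ, v ≠ 0 → eval ![v, w] p = 0 := by
    intro v w hv
    have hvec : (fun i => v * (![1, w / v] : Fin 2 → ℂ) i) = ![v, w] := by
      funext i; fin_cases i <;> simp [mul_div_cancel₀ _ hv]
    have hsm := eval_smul_homog hp v ![1, w / v]
    rw [hvec, ← hFval, hF0] at hsm
    simpa using hsm
  have hX0p : (X 0 : MvPolynomial (Fin 2) ℂ) * p = 0 := by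
    apply MvPolynomial.funext
    intro x
    rw [eval_mul, eval_X, map_zero]
    by_cases hx : x 0 = 0
    · rw [hx, zero_mul]
    · have hx1 := hallv (x 0) (x 1) hx
      rw [show ![x 0, x 1] = x from by funext i; fin_cases i <;> simp] at hx1
      rw [hx1, mul_zero]
  rcases mul_eq_zero.mp hX0p with h | h
  · exact absurd h (X_ne_zero 0)
  · exact h
end

section
/- Let n be an even natural number. The set of homogeneous polynomials p(v,w) of degree n over ℚ satisfying p(v,w) = -p(-2v - w, v + w) is {0} if n ≡ 0 (mod 4), and is exactly the set of scalar multiples of (v² + 3vw + w²)^(n/2) if n ≡ 2 (mod 4). -/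
open MvPolynomial

noncomputable section SD

abbrev SDR := MvPolynomial (Fin 2) ℚ

def SDT : SDR →ₐ[ℚ] SDR := aeval ![-2 * X 0 - X 1, X 0 + X 1]

def SDQ : SDR := X 0 ^ 2 + 3 * X 0 * X 1 + X 1 ^ 2

def SDPhi : SDR →ₐ[ℚ] Polynomial ℚ := aeval ![Polynomial.X, 1]

lemma SDPhi_apply (p : SDR) : SDPhi p = aeval (![Polynomial.X, 1]) p := rfl

lemma SDT_Q : SDT SDQ = -SDQ := by
  have h3 : (3 : SDR) = C (3:ℚ) := (map_ofNat (C : ℚ →+* SDR) 3).symm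
  simp [SDT, SDQ, h3]
  rw [show (C (3:ℚ) : SDR) = 3 from map_ofNat _ 3]
  ring

lemma SDQ_hom : SDQ.IsHomogeneous 2 := by
  have h1 : (X 0 ^ 2 : SDR).IsHomogeneous 2 := isHomogeneous_X_pow 0 2
  have h2 : (3 * X 0 * X 1 : SDR).IsHomogeneous 2 := by
    have h := ((isHomogeneous_X ℚ (0 : Fin 2)).mul (isHomogeneous_X ℚ (1 : Fin 2))).C_mul (3:ℚ)
    have e : (3 * X 0 * X 1 : SDR) = C (3:ℚ) * (X 0 * X 1) := by
      rw [← map_ofNat (C : ℚ →+* SDR) 3]; ring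
    rwa [e]
  have h3 : (X 1 ^ 2 : SDR).IsHomogeneous 2 := isHomogeneous_X_pow 1 2
  exact (h1.add h2).add h3

lemma SDPhi_Q : SDPhi SDQ = Polynomial.X ^ 2 + 3 * Polynomial.X + 1 := by
  have h3 : (3 : SDR) = C (3:ℚ) := (map_ofNat (C : ℚ →+* SDR) 3).symm
  simp [SDPhi, SDQ, h3]
  rw [show (Polynomial.C (3:ℚ)) = 3 from map_ofNat _ 3]

lemma SD_deg2 (d : Fin 2 →₀ ℕ) : (Finsupp.weight 1) d = d 0 + d 1 := by
  show (Finsupp.weight fun _ => (1:ℕ)) d = d 0 + d 1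
  rw [← Finsupp.degree_eq_weight_one]
  unfold Finsupp.degree
  show ∑ i ∈ d.support, d i = d 0 + d 1
  rw [Finset.sum_subset (Finset.subset_univ d.support)
    (fun i _ hi => Finsupp.notMem_support_iff.mp hi)]
  simp [Fin.sum_univ_two]

lemma SD_scale {n : ℕ} {p : SDR} (hp : p.IsHomogeneous n) (r : ℝ) (x : Fin 2 → ℝ) :
    aeval (fun i => r * x i) p = r ^ n * aeval x p := by
  rw [aeval_def, aeval_def, eval₂_eq', eval₂_eq', Finset.mul_sum]
  apply Finset.sum_congr rfl
  intro d hd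
  have hdeg : d 0 + d 1 = n := by
    rw [← SD_deg2 d]; exact hp (mem_support_iff.mp hd)
  rw [Fin.prod_univ_two, Fin.prod_univ_two, mul_pow, mul_pow]
  rw [← hdeg, pow_add]
  ring

lemma SD_coeff_phi {n : ℕ} {p : SDR} (hp : p.IsHomogeneous n) (a : ℕ) :
    (aeval (![Polynomial.X, 1]) p : Polynomial ℚ).coeff a =
      MvPolynomial.coeff (Finsupp.single 0 a + Finsupp.single 1 (n - a)) p := by
  rw [aeval_def, eval₂_eq']
  have e1 : ∀ d : Fin 2 →₀ ℕ, (∏ i, (![Polynomial.X, (1:Polynomial ℚ)] i) ^ d i)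
      = Polynomial.X ^ (d 0) := by
    intro d; rw [Fin.prod_univ_two]; simp
  simp only [e1]
  rw [Polynomial.finset_sum_coeff]
  set d0 : Fin 2 →₀ ℕ := Finsupp.single 0 a + Finsupp.single 1 (n - a) with hd0
  have hd00 : d0 0 = a := by simp [hd0, Finsupp.single_apply]
  have hd01 : d0 1 = n - a := by simp [hd0, Finsupp.single_apply]
  by_cases hmem : d0 ∈ p.support
  · rw [Finset.sum_eq_single_of_mem d0 hmem]
    · simp [hd00]
    · intro d hd hne
      have hda : d 0 ≠ a := by
        intro h0a
        apply hne
        have hsum : d 0 + d 1 = n := by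
          rw [← SD_deg2 d]; exact hp (mem_support_iff.mp hd)
        have han : a ≤ n := by omega
        ext i
        fin_cases i
        · show d 0 = d0 0; omega
        · show d 1 = d0 1; rw [hd01]; omega
      have hna : ¬ a = d 0 := fun h => hda h.symm
      simp [Polynomial.coeff_X_pow, hna]
  · rw [Finset.sum_eq_zero, eq_comm]
    · exact notMem_support_iff.mp hmem
    · intro d hd
      have hda : d 0 ≠ a := by
        intro h0a
        apply hmem
        have hsum : d 0 + d 1 = n := by
          rw [← SD_deg2 d]; exact hp (mem_support_iff.mp hd)
        have : d = d0 := by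
          ext i; fin_cases i
          · show d 0 = d0 0; omega
          · show d 1 = d0 1; rw [hd01]; omega
        rwa [← this]
      have hna : ¬ a = d 0 := fun h => hda h.symm
      simp [Polynomial.coeff_X_pow, hna]

lemma SD_phi_inj {n : ℕ} {p : SDR} (hp : p.IsHomogeneous n)
    (h : (aeval (![Polynomial.X, 1]) p : Polynomial ℚ) = 0) : p = 0 := by
  ext d
  by_cases hd : d 0 + d 1 = n
  · have hdn : d = Finsupp.single 0 (d 0) + Finsupp.single 1 (n - d 0) := by
      ext i; fin_cases i <;> simp [Finsupp.single_apply] <;> omega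
    rw [coeff_zero, hdn, ← SD_coeff_phi hp (d 0), h, Polynomial.coeff_zero]
  · rw [coeff_zero]
    by_contra hne
    exact hd (by rw [← SD_deg2 d]; exact hp hne)

lemma SD_phi_natDegree {n : ℕ} {p : SDR} (hp : p.IsHomogeneous n) :
    (aeval (![Polynomial.X, 1]) p : Polynomial ℚ).natDegree ≤ n := by
  rw [Polynomial.natDegree_le_iff_coeff_eq_zero]
  intro a ha
  rw [SD_coeff_phi hp a]
  apply hp.coeff_eq_zero
  rw [Finsupp.degree_eq_weight_one, show (Finsupp.weight fun _ => (1:ℕ)) = Finsupp.weight (1 : Fin 2 → ℕ) from rfl, SD_deg2]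
  simp [Finsupp.single_apply]
  omega

def SDPsi (n : ℕ) (f : Polynomial ℚ) : SDR :=
  ∑ i ∈ Finset.range (n + 1), MvPolynomial.C (f.coeff i) * X 0 ^ i * X 1 ^ (n - i)

lemma SDPsi_hom (n : ℕ) (f : Polynomial ℚ) : (SDPsi n f).IsHomogeneous n := by
  apply IsHomogeneous.sum
  intro i hi
  rw [Finset.mem_range] at hi
  have h := ((isHomogeneous_X_pow (R := ℚ) (0 : Fin 2) i).C_mul (f.coeff i)).mul
    (isHomogeneous_X_pow (R := ℚ) (1 : Fin 2) (n - i))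
  rw [show i + (n - i) = n by omega] at h
  rw [mul_assoc]
  rw [mul_assoc] at h
  exact h

lemma SDPsi_phi (n : ℕ) (f : Polynomial ℚ) (hf : f.natDegree ≤ n) :
    aeval (![Polynomial.X, 1]) (SDPsi n f) = f := by
  rw [SDPsi, map_sum]
  have e : ∀ i ∈ Finset.range (n+1),
      aeval (![Polynomial.X, 1]) (MvPolynomial.C (f.coeff i) * X 0 ^ i * X 1 ^ (n - i))
        = Polynomial.monomial i (f.coeff i) := by
    intro i _
    simp [Polynomial.C_mul_X_pow_eq_monomial]
  rw [Finset.sum_congr rfl e]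
  exact (Polynomial.as_sum_range' f (n+1) (by omega)).symm

lemma SD_sqrt5_sq : (Real.sqrt 5) ^ 2 = 5 := Real.sq_sqrt (by norm_num)

lemma SD_mu_root1 : ((-3 + Real.sqrt 5) / 2) ^ 2 + 3 * ((-3 + Real.sqrt 5) / 2) + 1 = 0 := by
  have h := SD_sqrt5_sq; nlinarith [h]

lemma SD_mu_root2 : ((-3 - Real.sqrt 5) / 2) ^ 2 + 3 * ((-3 - Real.sqrt 5) / 2) + 1 = 0 := by
  have h := SD_sqrt5_sq; nlinarith [h]

lemma SD_mu_ne : ((-3 + Real.sqrt 5) / 2) ≠ ((-3 - Real.sqrt 5) / 2) := by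
  have h5 : (0:ℝ) < Real.sqrt 5 := Real.sqrt_pos.mpr (by norm_num)
  intro h; nlinarith [h5]

lemma SD_U_dvd {f : Polynomial ℚ}
    (h1 : Polynomial.aeval ((-3 + Real.sqrt 5) / 2) f = 0)
    (h2 : Polynomial.aeval ((-3 - Real.sqrt 5) / 2) f = 0) :
    (Polynomial.X ^ 2 + 3 * Polynomial.X + 1 : Polynomial ℚ) ∣ f := by
  set μ₁ : ℝ := (-3 + Real.sqrt 5) / 2
  set μ₂ : ℝ := (-3 - Real.sqrt 5) / 2
  rw [← Polynomial.map_dvd_map' (algebraMap ℚ ℝ)]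
  have hmap : (Polynomial.X ^ 2 + 3 * Polynomial.X + 1 : Polynomial ℚ).map (algebraMap ℚ ℝ)
      = (Polynomial.X - Polynomial.C μ₁) * (Polynomial.X - Polynomial.C μ₂) := by
    have hsum : μ₁ + μ₂ = -3 := by ring
    have hprod : μ₁ * μ₂ = 1 := by
      have h := SD_sqrt5_sq
      simp only [μ₁, μ₂]
      nlinarith [h]
    have hC1 : Polynomial.C μ₁ + Polynomial.C μ₂ = (-3 : Polynomial ℝ) := by
      rw [← map_add, hsum, map_neg, map_ofNat]
    have hC2 : Polynomial.C μ₁ * Polynomial.C μ₂ = (1 : Polynomial ℝ) := by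
      rw [← map_mul, hprod, map_one]
    rw [Polynomial.map_add, Polynomial.map_add, Polynomial.map_one, Polynomial.map_mul,
      Polynomial.map_pow, Polynomial.map_X, Polynomial.map_ofNat]
    linear_combination Polynomial.X * hC1 - hC2
  rw [hmap]
  have hd1 : (Polynomial.X - Polynomial.C μ₁) ∣ f.map (algebraMap ℚ ℝ) := by
    rw [Polynomial.dvd_iff_isRoot]
    rw [Polynomial.IsRoot, Polynomial.eval_map, ← Polynomial.aeval_def, h1]
  have hd2 : (Polynomial.X - Polynomial.C μ₂) ∣ f.map (algebraMap ℚ ℝ) := by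
    rw [Polynomial.dvd_iff_isRoot]
    rw [Polynomial.IsRoot, Polynomial.eval_map, ← Polynomial.aeval_def, h2]
  exact (Polynomial.isCoprime_X_sub_C_of_isUnit_sub
    (sub_ne_zero_of_ne SD_mu_ne).isUnit).mul_dvd hd1 hd2

lemma SD_root {k : ℕ} {ε : ℚ} (hε : ε = 1 ∨ ε = -1) (hk : ε = 1 → 1 ≤ k) {p : SDR}
    (hp : p.IsHomogeneous (2 * k)) (heq : p = MvPolynomial.C ε * SDT p)
    {μ : ℝ} (hμ : μ ^ 2 + 3 * μ + 1 = 0) :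
    Polynomial.aeval μ (SDPhi p) = 0 := by
  have hcomp : ∀ q : SDR, Polynomial.aeval μ (SDPhi q) = aeval (![μ, 1]) q := by
    have hcc : (Polynomial.aeval μ).comp SDPhi = aeval (![μ, (1:ℝ)]) := by
      apply MvPolynomial.algHom_ext
      intro i
      fin_cases i <;> simp [SDPhi]
    intro q
    exact AlgHom.congr_fun hcc q
  have hTcomp : aeval (![μ, (1:ℝ)]) (SDT p) = aeval (![-2 * μ - 1, μ + 1]) p := by
    have hcc : (aeval (![μ, (1:ℝ)])).comp SDT = aeval (![-2 * μ - 1, μ + 1]) := by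
      apply MvPolynomial.algHom_ext
      intro i
      fin_cases i <;> simp [SDT]
    exact AlgHom.congr_fun hcc p
  have hvec : (![-2 * μ - 1, μ + 1] : Fin 2 → ℝ) = fun i => (μ + 1) * (![μ, 1] i) := by
    funext i
    fin_cases i
    · show -2 * μ - 1 = (μ + 1) * μ
      nlinarith [hμ]
    · show μ + 1 = (μ + 1) * 1
      ring
  have hscale : aeval (![-2 * μ - 1, μ + 1]) p = (μ + 1) ^ (2 * k) * aeval (![μ, 1]) p := by
    rw [hvec, SD_scale hp]
  have hmain := congrArg (aeval (![μ, (1:ℝ)])) heq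
  rw [map_mul, aeval_C, hTcomp, hscale, eq_ratCast (algebraMap ℚ ℝ) ε] at hmain
  set A := aeval (![μ, (1:ℝ)]) p with hA
  set lam := μ + 1 with hlam
  have hquad : lam ^ 2 + lam - 1 = 0 := by rw [hlam]; nlinarith [hμ]
  have hne : (1 : ℝ) - (ε : ℝ) * lam ^ (2 * k) ≠ 0 := by
    have hlam2 : lam ^ (2 * k) = (lam ^ 2) ^ k := by rw [pow_mul]
    rcases hε with h | h
    · subst h
      have hk1 : k ≠ 0 := by have := hk rfl; omega
      rcases lt_trichotomy (lam ^ 2) 1 with hlt | heq1 | hgt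
      · have hp1 := pow_lt_one₀ (sq_nonneg lam) hlt hk1
        rw [hlam2]; push_cast; intro hcon; nlinarith [hp1]
      · exfalso
        have hl0 : lam = 0 := by nlinarith [heq1, hquad]
        rw [hl0] at heq1; norm_num at heq1
      · have hp1 := one_lt_pow₀ hgt hk1
        rw [hlam2]; push_cast; intro hcon; nlinarith [hp1]
    · subst h
      have hge : (0:ℝ) ≤ lam ^ (2 * k) := by rw [hlam2]; positivity
      push_cast
      intro hcon; nlinarith [hge]
  have hzero : (1 - (ε : ℝ) * lam ^ (2 * k)) * A = 0 := by
    linear_combination hmain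
  rw [hcomp]
  exact (mul_eq_zero.mp hzero).resolve_left hne

lemma SD_homog0 {p : SDR} (hp : p.IsHomogeneous 0) : p = MvPolynomial.C (coeff 0 p) := by
  ext d
  rcases eq_or_ne d 0 with rfl | hd
  · simp
  · have h1 : coeff d (MvPolynomial.C (coeff 0 p) : SDR) = 0 := by
      simp [coeff_C, Ne.symm hd]
    rw [h1]
    apply hp.coeff_eq_zero
    rw [Finsupp.degree_eq_weight_one, show (Finsupp.weight fun _ => (1:ℕ)) = Finsupp.weight (1 : Fin 2 → ℕ) from rfl, SD_deg2]
    have : d 0 ≠ 0 ∨ d 1 ≠ 0 := by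
      by_contra hc
      push_neg at hc
      exact hd (by ext i; fin_cases i
                   · show d 0 = 0; exact hc.1
                   · show d 1 = 0; exact hc.2)
    omega

lemma SD_key : ∀ k : ℕ, ∀ ε : ℚ, (ε = 1 ∨ ε = -1) → ∀ p : SDR, p.IsHomogeneous (2 * k) →
    p = MvPolynomial.C ε * SDT p → ∃ c : ℚ, p = c • SDQ ^ k ∧ (c ≠ 0 → ε = (-1) ^ k) := by
  intro k
  induction k with
  | zero =>
    intro ε hε p hp heq
    have hp0 : p.IsHomogeneous 0 := by simpa using hp
    have hpc := SD_homog0 hp0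
    set c := coeff 0 p with hc
    have hTC : SDT (MvPolynomial.C c) = MvPolynomial.C c := by
      rw [show (MvPolynomial.C c : SDR) = algebraMap ℚ SDR c from rfl]
      exact SDT.commutes c
    rw [hpc, hTC, ← map_mul] at heq
    have hceq : c = ε * c := MvPolynomial.C_injective _ _ heq
    rcases hε with h1 | h1
    · refine ⟨c, ?_, fun _ => by rw [h1, pow_zero]⟩
      rw [hpc, pow_zero, smul_eq_C_mul, mul_one]
    · have hc0 : c = 0 := by rw [h1] at hceq; linarith
      refine ⟨0, ?_, fun hcn => absurd rfl hcn⟩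
      rw [hpc, hc0, map_zero, zero_smul]
  | succ k ih =>
    intro ε hε p hp heq
    have hr1 := SD_root hε (fun _ => by omega) hp heq SD_mu_root1
    have hr2 := SD_root hε (fun _ => by omega) hp heq SD_mu_root2
    obtain ⟨h, hh⟩ := SD_U_dvd hr1 hr2
    by_cases h0 : h = 0
    · have hphi0 : SDPhi p = 0 := by rw [hh, h0, mul_zero]
      have hp0 : p = 0 := SD_phi_inj hp (by rw [← SDPhi_apply]; exact hphi0)
      exact ⟨0, by rw [hp0, zero_smul], fun hcn => absurd rfl hcn⟩
    · have hUne : (Polynomial.X ^ 2 + 3 * Polynomial.X + 1 : Polynomial ℚ) ≠ 0 := by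
        intro hU
        have := congrArg (Polynomial.eval 0) hU
        simp at this
      have hUdeg : (Polynomial.X ^ 2 + 3 * Polynomial.X + 1 : Polynomial ℚ).natDegree = 2 := by
        compute_degree!
      have hfdeg : (SDPhi p).natDegree ≤ 2 * (k + 1) := SD_phi_natDegree hp
      have hmul := Polynomial.natDegree_mul hUne h0
      have hhdeg : h.natDegree ≤ 2 * k := by
        rw [← hh] at hmul
        omega
      set H := SDPsi (2 * k) h with hH
      have hHhom := SDPsi_hom (2 * k) h
      have hPhiH : SDPhi H = h := SDPsi_phi _ _ hhdeg
      have hQH : p = SDQ * H := by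
        have hsub : (p - SDQ * H).IsHomogeneous (2 * (k + 1)) := by
          apply hp.sub
          have := SDQ_hom.mul hHhom
          rwa [show 2 + 2 * k = 2 * (k + 1) by ring] at this
        have hphisub : SDPhi (p - SDQ * H) = 0 := by
          rw [map_sub, map_mul, SDPhi_Q, hPhiH, hh, sub_self]
        have := SD_phi_inj hsub (by rw [← SDPhi_apply]; exact hphisub)
        linear_combination this
      have hQne : SDQ ≠ 0 := by
        intro hq
        have := SDPhi_Q
        rw [hq, map_zero] at this
        have h2 := congrArg (Polynomial.eval 0) this
        simp at h2
      have hHeq : H = MvPolynomial.C (-ε) * SDT H := by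
        have hstep : SDQ * H = SDQ * (MvPolynomial.C (-ε) * SDT H) := by
          calc SDQ * H = p := hQH.symm
            _ = MvPolynomial.C ε * SDT p := heq
            _ = MvPolynomial.C ε * (SDT SDQ * SDT H) := by rw [hQH, map_mul]
            _ = MvPolynomial.C ε * (-SDQ * SDT H) := by rw [SDT_Q]
            _ = SDQ * (MvPolynomial.C (-ε) * SDT H) := by rw [map_neg]; ring
        exact mul_left_cancel₀ hQne hstep
      obtain ⟨c, hc1, hc2⟩ := ih (-ε)
        (by rcases hε with h | h
            · right; rw [h]
            · left; rw [h]; norm_num) H hHhom hHeq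
      refine ⟨c, ?_, ?_⟩
      · rw [hQH, hc1, mul_smul_comm, ← pow_succ']
      · intro hcne
        have hsgn := hc2 hcne
        have : ε = -(-1 : ℚ) ^ k := by linarith [hsgn]
        rw [this, pow_succ]
        ring

end SD

/-- For even `n`, the set of homogeneous polynomials of degree `n` over `ℚ` satisfying
`p(v,w) = -p(-2v-w, v+w)` is `{0}` if `n ≡ 0 (mod 4)`, and is exactly the set of scalar
multiples of `(v² + 3vw + w²)^(n/2)` if `n ≡ 2 (mod 4)`. -/
theorem superdiv_poly_classification (n : ℕ) (hn : Even n) :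
    (n % 4 = 0 → ∀ p : MvPolynomial (Fin 2) ℚ,
      (p.IsHomogeneous n ∧ p = -(aeval ![-2 * X 0 - X 1, X 0 + X 1] p)) ↔ p = 0) ∧
    (n % 4 = 2 → ∀ p : MvPolynomial (Fin 2) ℚ,
      (p.IsHomogeneous n ∧ p = -(aeval ![-2 * X 0 - X 1, X 0 + X 1] p)) ↔
        ∃ c : ℚ, p = c • (X 0 ^ 2 + 3 * X 0 * X 1 + X 1 ^ 2) ^ (n / 2)) := by
  have hn2 : n % 2 = 0 := Nat.even_iff.mp hn
  have hk : n = 2 * (n / 2) := by omega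
  have hCneg : (MvPolynomial.C (-1 : ℚ) : SDR) = -1 := by
    rw [map_neg, map_one]
  constructor
  · intro h4 p
    constructor
    · rintro ⟨hp, heqn⟩
      have heq : p = MvPolynomial.C (-1 : ℚ) * SDT p := by
        rw [hCneg, neg_one_mul]
        exact heqn
      obtain ⟨c, hc1, hc2⟩ := SD_key (n / 2) (-1) (Or.inr rfl) p (by rwa [← hk]) heq
      have hkeven : Even (n / 2) := by
        rw [Nat.even_iff]; omega
      rcases eq_or_ne c 0 with rfl | hcne
      · rw [hc1, zero_smul]
      · exfalso
        have := hc2 hcne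
        rw [hkeven.neg_one_pow] at this
        norm_num at this
    · rintro rfl
      exact ⟨isHomogeneous_zero _ _ n, by simp⟩
  · intro h4 p
    have hkodd : Odd (n / 2) := by
      rw [Nat.odd_iff]; omega
    constructor
    · rintro ⟨hp, heqn⟩
      have heq : p = MvPolynomial.C (-1 : ℚ) * SDT p := by
        rw [hCneg, neg_one_mul]
        exact heqn
      obtain ⟨c, hc1, _⟩ := SD_key (n / 2) (-1) (Or.inr rfl) p (by rwa [← hk]) heq
      exact ⟨c, hc1⟩
    · rintro ⟨c, rfl⟩
      constructor
      · have := (SDQ_hom.pow (n / 2)).C_mul c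
        rw [← smul_eq_C_mul, ← hk] at this
        exact this
      · show c • SDQ ^ (n / 2) = -(SDT (c • SDQ ^ (n / 2)))
        rw [map_smul, map_pow, SDT_Q, hkodd.neg_pow, smul_neg, neg_neg]
end

section
/- Let q ∈ ℂ be a root of unity and let λ ∈ ℂ satisfy λ² - qλ + q = 0. If |λ| = 1, then q = 1 and λ² - λ + 1 = 0; in particular λ is a primitive 6-th root of unity. -/
/-- If `q` is a root of unity, `λ` satisfies `λ² - qλ + q = 0`, and `|λ| = 1`, then
`q = 1`, `λ² - λ + 1 = 0`, and `λ` is a primitive 6-th root of unity. -/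
theorem eigenvalue_modulus_one (q lam : ℂ) (hq : ∃ m : ℕ, 0 < m ∧ q ^ m = 1)
    (hlam : lam ^ 2 - q * lam + q = 0) (habs : ‖lam‖ = 1) :
    q = 1 ∧ lam ^ 2 - lam + 1 = 0 ∧ IsPrimitiveRoot lam 6 := by
  obtain ⟨m, hm, hqm⟩ := hq
  have hlam0 : lam ≠ 0 := by
    intro h; rw [h] at habs; simp at habs
  have hlam1 : lam ≠ 1 := by
    intro h; rw [h] at hlam; norm_num at hlam
  have habsq : ‖q‖ = 1 := by
    have hpow : ‖q‖ ^ m = 1 := by rw [← norm_pow, hqm, norm_one]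
    have h0 : (0:ℝ) ≤ ‖q‖ := norm_nonneg q
    by_contra h
    rcases lt_or_gt_of_ne h with h1 | h1
    · nlinarith [pow_lt_one₀ h0 h1 hm.ne']
    · nlinarith [one_lt_pow₀ h1 hm.ne']
  have hfac : q * (lam - 1) = lam ^ 2 := by linear_combination -hlam
  have habs1 : ‖lam - 1‖ = 1 := by
    have := congrArg (‖·‖) hfac
    rw [norm_mul, norm_pow, habsq, habs] at this
    simpa using this
  have hns : lam * (starRingEnd ℂ) lam = 1 := by
    rw [Complex.mul_conj]
    norm_cast
    rw [Complex.normSq_eq_norm_sq, habs]; norm_num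
  have hns1 : (lam - 1) * (starRingEnd ℂ) (lam - 1) = 1 := by
    rw [Complex.mul_conj]
    norm_cast
    rw [Complex.normSq_eq_norm_sq, habs1]; norm_num
  have hsum : lam + (starRingEnd ℂ) lam = 1 := by
    have hc : (starRingEnd ℂ) (lam - 1) = (starRingEnd ℂ) lam - 1 := by
      simp [map_sub]
    rw [hc] at hns1
    linear_combination hns - hns1
  have hconj : (starRingEnd ℂ) lam = lam⁻¹ := (Complex.inv_eq_conj habs).symm
  rw [hconj] at hsum
  have hquad : lam ^ 2 - lam + 1 = 0 := by
    have hmul : lam * (lam + lam⁻¹) = lam * 1 := by rw [hsum]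
    rw [mul_add, mul_inv_cancel₀ hlam0] at hmul
    linear_combination hmul
  have hq1 : q = 1 := by
    have h0 : (lam - 1) * (q - 1) = 0 := by linear_combination hquad - hlam
    rcases mul_eq_zero.mp h0 with h | h
    · exact absurd (by linear_combination h) hlam1
    · linear_combination h
  refine ⟨hq1, hquad, ?_⟩
  have hl2 : lam ^ 2 = lam - 1 := by linear_combination hquad
  have hl3 : lam ^ 3 = -1 := by
    have h3 : lam ^ 3 = lam * lam ^ 2 := by ring
    rw [h3, hl2]
    linear_combination hquad
  have hl6 : lam ^ 6 = 1 := by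
    have h6 : lam ^ 6 = (lam ^ 3) ^ 2 := by ring
    rw [h6, hl3]; ring
  constructor
  · exact hl6
  · intro l hl
    have h6 : lam ^ (l % 6) = 1 := by
      conv at hl => rw [← Nat.div_add_mod l 6]
      rw [pow_add, pow_mul, hl6, one_pow, one_mul] at hl
      exact hl
    have hr : l % 6 = 0 := by
      have hlt : l % 6 < 6 := Nat.mod_lt _ (by norm_num)
      interval_cases h : l % 6
      · rfl
      · simp at h6; exact absurd h6 hlam1
      · exfalso
        rw [hl2] at h6
        have h2 : lam = 2 := by linear_combination h6
        rw [h2] at hquad; norm_num at hquad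
      · exfalso; rw [hl3] at h6; norm_num at h6
      · exfalso
        have h4 : lam ^ 4 = -lam := by
          have : lam ^ 4 = lam ^ 3 * lam := by ring
          rw [this, hl3]; ring
        rw [h4] at h6
        have hneg : lam = -1 := by linear_combination -h6
        rw [hneg] at hquad; norm_num at hquad
      · exfalso
        have h5 : lam ^ 5 = -(lam ^ 2) := by
          have : lam ^ 5 = lam ^ 3 * lam ^ 2 := by ring
          rw [this, hl3]; ring
        rw [h5, hl2] at h6
        exact hlam0 (by linear_combination -h6)
    exact Nat.dvd_of_mod_eq_zero hr
end

section
/- No root of unity q ∈ ℂ satisfies the equation q⁴ - q³ + 2q² + 1 = 0. -/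
/-- No root of unity `q ∈ ℂ` satisfies `q⁴ - q³ + 2q² + 1 = 0`. -/
theorem quartic_no_root_of_unity (q : ℂ) (hq : ∃ m : ℕ, 0 < m ∧ q ^ m = 1) :
    q ^ 4 - q ^ 3 + 2 * q ^ 2 + 1 ≠ 0 := by
  intro h
  obtain ⟨m, hm, hqm⟩ := hq
  have hq0 : q ≠ 0 := by
    intro h0
    rw [h0, zero_pow hm.ne'] at hqm
    exact zero_ne_one hqm
  have habs : ‖q‖ = 1 := by
    have h1 : ‖q‖ ^ m = 1 := by
      rw [← norm_pow, hqm, norm_one]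
    by_contra hne
    rcases lt_or_gt_of_ne hne with hlt | hgt
    · have := pow_lt_one₀ (norm_nonneg q) hlt hm.ne'
      rw [h1] at this; exact lt_irrefl 1 this
    · have := one_lt_pow₀ hgt hm.ne'
      rw [h1] at this; exact lt_irrefl 1 this
  have hconj : (starRingEnd ℂ) q = q⁻¹ := by
    apply eq_inv_of_mul_eq_one_left
    rw [mul_comm, Complex.mul_conj, Complex.normSq_eq_norm_sq, habs]
    norm_num
  have h2 := congrArg (starRingEnd ℂ) h
  simp only [map_add, map_sub, map_mul, map_pow, map_one, map_zero, map_ofNat,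
    hconj] at h2
  have h3 : q ^ 4 - q + 2 * q ^ 2 + 1 = 0 := by
    field_simp at h2
    have h5 : q ^ 5 * (q ^ 4 - q + 2 * q ^ 2 + 1) = 0 := by linear_combination q ^ 5 * h2
    rcases mul_eq_zero.mp h5 with h6 | h6
    · exact absurd (pow_eq_zero_iff (by norm_num) |>.mp h6) hq0
    · exact h6
  have h4 : q * (q - 1) * (q + 1) = 0 := by linear_combination h3 - h
  rcases mul_eq_zero.mp h4 with h5 | h5
  · rcases mul_eq_zero.mp h5 with h6 | h6
    · exact hq0 h6
    · rw [sub_eq_zero] at h6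
      rw [h6] at h; norm_num at h
  · have h6 : q = -1 := eq_neg_of_add_eq_zero_left h5
    rw [h6] at h; norm_num at h
end

section
/- For every root of unity q ∈ ℂ, one has q³ - q² - 1 ≠ 0. -/
/-- For every root of unity `q ∈ ℂ`, one has `q³ - q² - 1 ≠ 0`. -/
theorem cubic_nonzero_on_roots_of_unity (q : ℂ) (hq : ∃ m : ℕ, 0 < m ∧ q ^ m = 1) :
    q ^ 3 - q ^ 2 - 1 ≠ 0 := by
  obtain ⟨m, hm, hqm⟩ := hq
  have hq0 : q ≠ 0 := by
    intro h; rw [h, zero_pow hm.ne'] at hqm; exact zero_ne_one hqm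
  have habs : ‖q‖ = 1 := by
    have h1 : ‖q‖ ^ m = 1 := by
      rw [← norm_pow, hqm, norm_one]
    have h2 := norm_nonneg q
    rcases pow_eq_one_iff_cases.mp h1 with h | h | h
    · omega
    · exact h
    · nlinarith [h.1]
  have hconj : (starRingEnd ℂ) q = q⁻¹ := by
    have h := Complex.mul_conj q
    rw [Complex.normSq_eq_norm_sq, habs] at h
    norm_num at h
    field_simp
    linear_combination h
  intro h
  have hc : (starRingEnd ℂ) (q ^ 3 - q ^ 2 - 1) = 0 := by rw [h, map_zero]
  simp only [map_sub, map_pow, map_one, hconj] at hc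
  field_simp at hc
  have h3 : q ^ 3 * (q + 1) = 0 := by linear_combination -(q ^ 2 * h) - q ^ 2 * hc
  rcases mul_eq_zero.mp h3 with h4 | h4
  · exact pow_ne_zero 3 hq0 h4
  · have hq1 : q = -1 := by linear_combination h4
    rw [hq1] at h
    norm_num at h
end

section
/- Let V_n be the (n+1)-dimensional ℚ-vector space of homogeneous polynomials of degree n in ℚ[v,w], and let R : V_n → V_n be the linear endomorphism defined by (R p)(v,w) = p(-w, v+w). Then the trace of R equals Σ_{k=0}^{⌊n/2⌋} (-1)^k · C(n-k, k), where C(m,j) is the binomial coefficient. -/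
open MvPolynomial

noncomputable section TraceAux

variable (n : ℕ)

private def dvec (i : Fin (n+1)) : Fin 2 →₀ ℕ :=
  Finsupp.single 0 (i : ℕ) + Finsupp.single 1 (n - i)

private lemma degree_fin2 (e : Fin 2 →₀ ℕ) : e.degree = e 0 + e 1 := by
  rw [Finsupp.degree_apply, Finset.sum_subset (Finset.subset_univ _)]
  · exact Fin.sum_univ_two e
  · intro x _ hx
    simpa using Finsupp.notMem_support_iff.mp hx

private lemma dvec_apply0 (i : Fin (n+1)) : dvec n i 0 = i := by simp [dvec]
private lemma dvec_apply1 (i : Fin (n+1)) : dvec n i 1 = n - i := by simp [dvec]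

private lemma dvec_degree (i : Fin (n+1)) : (dvec n i).degree = n := by
  rw [degree_fin2, dvec_apply0, dvec_apply1]
  omega

private lemma dvec_injective : Function.Injective (dvec n) := by
  intro i j h
  have := congrArg (fun f => f 0) h
  simp only [dvec_apply0] at this
  exact Fin.ext this

private lemma eq_dvec {e : Fin 2 →₀ ℕ} (he : e.degree = n) :
    e = dvec n ⟨e 0, by rw [degree_fin2] at he; omega⟩ := by
  rw [degree_fin2] at he
  ext a
  fin_cases a
  · simp [dvec_apply0]
  · simpa [dvec_apply1] using by omega

private def bvec (i : Fin (n+1)) : ↥(homogeneousSubmodule (Fin 2) ℚ n) :=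
  ⟨monomial (dvec n i) 1, (mem_homogeneousSubmodule _ _).mpr
    (isHomogeneous_monomial 1 (dvec_degree n i))⟩

private lemma bvec_indep : LinearIndependent ℚ (bvec n) := by
  have h := ((MvPolynomial.basisMonomials (Fin 2) ℚ).linearIndependent.comp
    (dvec n) (dvec_injective n))
  apply LinearIndependent.of_comp (homogeneousSubmodule (Fin 2) ℚ n).subtype
  have : (homogeneousSubmodule (Fin 2) ℚ n).subtype ∘ bvec n
      = (MvPolynomial.basisMonomials (Fin 2) ℚ) ∘ dvec n := by
    funext i
    simp [bvec, coe_basisMonomials]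
  rw [this]
  exact h

private lemma bvec_span : ⊤ ≤ Submodule.span ℚ (Set.range (bvec n)) := by
  rintro x -
  have hx : MvPolynomial.IsHomogeneous (x : MvPolynomial (Fin 2) ℚ) n :=
    (mem_homogeneousSubmodule _ _).mp x.2
  have key : ∑ i : Fin (n+1),
      coeff (dvec n i) (x : MvPolynomial (Fin 2) ℚ) • monomial (dvec n i) (1:ℚ)
      = (x : MvPolynomial (Fin 2) ℚ) := by
    apply MvPolynomial.ext
    intro e
    rw [MvPolynomial.coeff_sum]
    simp only [coeff_smul, coeff_monomial, smul_eq_mul, mul_ite, mul_one, mul_zero]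
    by_cases he : e.degree = n
    · set i0 : Fin (n+1) := ⟨e 0, by rw [degree_fin2] at he; omega⟩ with hi0
      have h0 : e = dvec n i0 := eq_dvec n he
      have hterm : ∀ i : Fin (n+1),
          (if dvec n i = e then coeff (dvec n i) (x : MvPolynomial (Fin 2) ℚ) else 0)
          = (if i = i0 then coeff e (x : MvPolynomial (Fin 2) ℚ) else 0) := by
        intro i
        by_cases hi : i = i0
        · subst hi; simp [← h0]
        · have hne : dvec n i ≠ e := fun h => hi (dvec_injective n (h.trans h0))
          simp [hne, hi]
      rw [Finset.sum_congr rfl (fun i _ => hterm i), Finset.sum_ite_eq' Finset.univ i0,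
        if_pos (Finset.mem_univ _)]
    · have h0 : coeff e (x : MvPolynomial (Fin 2) ℚ) = 0 := hx.coeff_eq_zero he
      rw [h0, Finset.sum_eq_zero]
      intro i _
      have hne : dvec n i ≠ e := fun h => he (h ▸ dvec_degree n i)
      simp [hne]
  rw [Submodule.mem_span_range_iff_exists_fun]
  refine ⟨fun i => coeff (dvec n i) (x : MvPolynomial (Fin 2) ℚ), Subtype.ext ?_⟩
  refine Eq.trans ?_ key
  push_cast
  rfl



private lemma hmono (k : Fin (n+1)) :
    (monomial (dvec n k) (1:ℚ) : MvPolynomial (Fin 2) ℚ) = X 0 ^ (k:ℕ) * X 1 ^ (n - k) := by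
  rw [X_pow_eq_monomial, X_pow_eq_monomial, monomial_mul, mul_one]
  rfl

private lemma aeval_monomial_dvec (j : Fin (n+1)) :
    aeval ![-X 1, X 0 + X 1] ((monomial (dvec n j) (1:ℚ)) : MvPolynomial (Fin 2) ℚ)
      = ∑ k : Fin (n+1), ((-1:ℚ)^(j:ℕ) * ((n - j).choose k : ℚ)) • monomial (dvec n k) (1:ℚ) := by
  have hrhs : (∑ k : Fin (n+1),
      ((-1:ℚ)^(j:ℕ) * ((n - j).choose k : ℚ)) • monomial (dvec n k) (1:ℚ))
      = ∑ k ∈ Finset.range (n+1),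
        ((-1:ℚ)^(j:ℕ) * ((n - (j:ℕ)).choose k : ℚ)) • (X 0 ^ k * X 1 ^ (n - k)) := by
    rw [← Fin.sum_univ_eq_sum_range (fun k =>
      ((-1:ℚ)^(j:ℕ) * ((n - (j:ℕ)).choose k : ℚ)) • ((X 0:MvPolynomial (Fin 2) ℚ) ^ k * X 1 ^ (n - k)))]
    exact Finset.sum_congr rfl fun k _ => by rw [hmono]
  rw [hrhs, hmono]
  simp only [map_mul, map_pow, aeval_X, Matrix.cons_val_zero, Matrix.cons_val_one, Matrix.head_cons]
  rw [add_pow, Finset.mul_sum]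
  rw [← Finset.sum_subset (Finset.range_subset_range.mpr (by omega : n - (j:ℕ) + 1 ≤ n + 1))
    (fun k _ hk => by
      rw [Nat.choose_eq_zero_of_lt (by simpa using hk), Nat.cast_zero, mul_zero, zero_smul])]
  refine Finset.sum_congr rfl fun k hk => ?_
  have hk' : k ≤ n - (j:ℕ) := Nat.lt_succ_iff.mp (Finset.mem_range.mp hk)
  have hpow : (X 1 : MvPolynomial (Fin 2) ℚ) ^ (n - k)
      = X 1 ^ (j:ℕ) * X 1 ^ (n - (j:ℕ) - k) := by
    rw [← pow_add]; congr 1; omega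
  rw [smul_eq_C_mul, map_mul, map_pow, map_neg, map_one, hpow, neg_pow, MvPolynomial.C_eq_coe_nat]
  ring

end TraceAux

/-- Let `V_n` be the space of homogeneous polynomials of degree `n` in `ℚ[v,w]` and let
`R : V_n → V_n` be the linear endomorphism with `(R p)(v,w) = p(-w, v+w)`. Then the trace
of `R` equals `Σ_{k=0}^{⌊n/2⌋} (-1)^k · C(n-k, k)`. -/
theorem trace_r (n : ℕ)
    (R : ↥(homogeneousSubmodule (Fin 2) ℚ n) →ₗ[ℚ] ↥(homogeneousSubmodule (Fin 2) ℚ n))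
    (hR : ∀ p : ↥(homogeneousSubmodule (Fin 2) ℚ n),
      (R p : MvPolynomial (Fin 2) ℚ) = aeval ![-X 1, X 0 + X 1] (p : MvPolynomial (Fin 2) ℚ)) :
    LinearMap.trace ℚ _ R =
      ∑ k ∈ Finset.range (n / 2 + 1), (-1 : ℚ) ^ k * ((n - k).choose k : ℚ) := by
  classical
  let b : Module.Basis (Fin (n+1)) ℚ ↥(homogeneousSubmodule (Fin 2) ℚ n) :=
    Module.Basis.mk (bvec_indep n) (bvec_span n)
  have hb : ∀ i, b i = bvec n i := fun i => Module.Basis.mk_apply _ _ i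
  have hRb : ∀ j, R (b j) =
      ∑ k : Fin (n+1), ((-1:ℚ)^(j:ℕ) * ((n - (j:ℕ)).choose (k:ℕ) : ℚ)) • b k := by
    intro j
    apply Subtype.ext
    have hcoe : ((∑ k : Fin (n+1),
        ((-1:ℚ)^(j:ℕ) * ((n - (j:ℕ)).choose (k:ℕ) : ℚ)) • b k :
          ↥(homogeneousSubmodule (Fin 2) ℚ n)) : MvPolynomial (Fin 2) ℚ)
        = ∑ k : Fin (n+1),
          ((-1:ℚ)^(j:ℕ) * ((n - (j:ℕ)).choose (k:ℕ) : ℚ)) • monomial (dvec n k) (1:ℚ) := by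
      push_cast
      exact Finset.sum_congr rfl fun k _ => by rw [hb k]; rfl
    rw [hcoe, hR, hb j]
    exact aeval_monomial_dvec n j
  rw [LinearMap.trace_eq_matrix_trace ℚ b R, Matrix.trace]
  have hentry : ∀ j : Fin (n+1), Matrix.diag (LinearMap.toMatrix b b R) j
      = (-1:ℚ)^(j:ℕ) * ((n - (j:ℕ)).choose (j:ℕ) : ℚ) := by
    intro j
    rw [Matrix.diag_apply, LinearMap.toMatrix_apply, hRb j, map_sum]
    simp only [map_smul, Module.Basis.repr_self]
    rw [Finset.sum_apply']
    simp only [Finsupp.smul_single, smul_eq_mul, mul_one, Finsupp.single_apply]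
    rw [Finset.sum_ite_eq' Finset.univ j, if_pos (Finset.mem_univ _)]
  rw [Finset.sum_congr rfl fun j _ => hentry j]
  rw [Fin.sum_univ_eq_sum_range (fun j => (-1:ℚ)^j * ((n - j).choose j : ℚ))]
  refine (Finset.sum_subset (Finset.range_subset_range.mpr (by omega : n / 2 + 1 ≤ n + 1))
    (fun j _ hj => ?_)).symm
  rw [Nat.choose_eq_zero_of_lt (by simp at hj; omega), Nat.cast_zero, mul_zero]
end

section
/- Let K be a field of characteristic zero containing a primitive l-th root of unity q, with l ≥ 1. Then the q-divergence is a cocycle on the Lie algebra of l-divisible tangential derivations: for all u, v ∈ tder_n^{lℕ}, one has u·qdiv(v) - v·qdiv(u) = qdiv([u,v]). -/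
namespace QdivAux

variable {K : Type*} [Field K] {n : ℕ}

noncomputable abbrev E (K : Type*) [Field K] (n : ℕ) :
    FreeAlgebra K (Fin n) ≃ₐ[K] MonoidAlgebra K (FreeMonoid (Fin n)) :=
  FreeAlgebra.equivMonoidAlgebraFreeMonoid

/-- the monomial attached to a word -/
noncomputable def P (K : Type*) [Field K] {n : ℕ} (w : FreeMonoid (Fin n)) :
    FreeAlgebra K (Fin n) :=
  (w.toList.map (FreeAlgebra.ι K)).prod

@[simp] lemma P_one : P K (1 : FreeMonoid (Fin n)) = 1 := rfl

@[simp] lemma P_cons (i : Fin n) (w : FreeMonoid (Fin n)) :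
    P K (FreeMonoid.of i * w) = FreeAlgebra.ι K i * P K w := by
  rw [P, P, FreeMonoid.toList_mul, FreeMonoid.toList_of]
  simp

lemma E_ι (i : Fin n) :
    E K n (FreeAlgebra.ι K i) = MonoidAlgebra.single (FreeMonoid.of i) (1 : K) := by
  rw [E, FreeAlgebra.equivMonoidAlgebraFreeMonoid]
  simp only [MonoidAlgebra.of_apply, AlgEquiv.ofAlgHom_apply, FreeAlgebra.lift_ι_apply]

lemma E_P (w : FreeMonoid (Fin n)) :
    E K n (P K w) = MonoidAlgebra.single w (1 : K) := by
  induction w using FreeMonoid.recOn with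
  | one => simp [MonoidAlgebra.one_def]
  | of_mul i w ih =>
      rw [P_cons, map_mul, E_ι, ih, MonoidAlgebra.single_mul_single, one_mul]

lemma E_symm_single (w : FreeMonoid (Fin n)) (c : K) :
    (E K n).symm (MonoidAlgebra.single w c) = c • P K w := by
  have : MonoidAlgebra.single w c = c • MonoidAlgebra.single w (1 : K) := by
    simp only [MonoidAlgebra.smul_single', mul_one]
  rw [this, map_smul, ← E_P, AlgEquiv.symm_apply_apply]



open Finsupp in
/-- the "strip the last letter if it is `k`" operator. -/
noncomputable def D (K : Type*) [Field K] {n : ℕ} (k : Fin n) :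
    FreeAlgebra K (Fin n) →ₗ[K] FreeAlgebra K (Fin n) :=
  (E K n).symm.toLinearMap ∘ₗ (MonoidAlgebra.coeffLinearEquiv K).symm.toLinearMap ∘ₗ
    (Finsupp.lsum K fun w : FreeMonoid (Fin n) =>
      if w.toList.getLast? = some k then
        Finsupp.lsingle (FreeMonoid.ofList w.toList.dropLast) else 0) ∘ₗ
    (MonoidAlgebra.coeffLinearEquiv K).toLinearMap ∘ₗ (E K n).toLinearMap

lemma D_P (k : Fin n) (w : FreeMonoid (Fin n)) :
    D K k (P K w) =
      if w.toList.getLast? = some k then P K (FreeMonoid.ofList w.toList.dropLast)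
      else 0 := by
  have hD : D K k (P K w) = (E K n).symm (MonoidAlgebra.ofCoeff
      ((Finsupp.lsum K fun w : FreeMonoid (Fin n) =>
        if w.toList.getLast? = some k then
          Finsupp.lsingle (FreeMonoid.ofList w.toList.dropLast) else 0)
        ((E K n) (P K w)).coeff)) := rfl
  rw [hD, E_P]
  rw [show (MonoidAlgebra.single w (1:K) : MonoidAlgebra K (FreeMonoid (Fin n))).coeff
      = Finsupp.single w (1:K) from rfl, Finsupp.lsum_single]
  by_cases h : w.toList.getLast? = some k
  · rw [if_pos h, if_pos h, Finsupp.lsingle_apply, MonoidAlgebra.ofCoeff_single]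
    exact (E_symm_single _ 1).trans (one_smul _ _)
  · rw [if_neg h, if_neg h, LinearMap.zero_apply, MonoidAlgebra.ofCoeff_zero, map_zero]

lemma rep (z : FreeAlgebra K (Fin n)) :
    z = ((E K n) z).coeff.sum fun w c => c • P K w := by
  have h : ((E K n) z).coeff.sum (fun w c => c • P K w)
      = (E K n).symm (((E K n) z).coeff.sum MonoidAlgebra.single) := by
    rw [map_finsuppSum]
    exact Finsupp.sum_congr fun w _ => (E_symm_single _ _).symm
  rw [h, MonoidAlgebra.sum_coeff_single, AlgEquiv.symm_apply_apply]

lemma D_mul_ι (k j : Fin n) (z : FreeAlgebra K (Fin n)) :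
    D K k (z * FreeAlgebra.ι K j) = if k = j then z else 0 := by
  conv_lhs => rw [rep z]
  rw [Finsupp.sum, Finset.sum_mul, map_sum]
  have key : ∀ w : FreeMonoid (Fin n), ∀ c : K,
      D K k ((c • P K w) * FreeAlgebra.ι K j) = if k = j then c • P K w else 0 := by
    intro w c
    have h1 : (c • P K w) * FreeAlgebra.ι K j = c • P K (w * FreeMonoid.of j) := by
      rw [smul_mul_assoc]
      congr 1
      rw [P, P, FreeMonoid.toList_mul, FreeMonoid.toList_of, List.map_append,
        List.prod_append]
      simp
    rw [h1, map_smul, D_P]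
    have h2 : (w * FreeMonoid.of j).toList = w.toList ++ [j] := by
      rw [FreeMonoid.toList_mul, FreeMonoid.toList_of]
    rw [h2, List.getLast?_concat, List.dropLast_concat]
    by_cases h : k = j
    · rw [if_pos (by rw [h]), if_pos h, FreeMonoid.ofList_toList]
    · rw [if_neg (by simpa [eq_comm] using h), if_neg h, smul_zero]
  calc (∑ w ∈ ((E K n) z).coeff.support, D K k ((((E K n) z).coeff w • P K w) * FreeAlgebra.ι K j))
      = ∑ w ∈ ((E K n) z).coeff.support, if k = j then ((E K n) z).coeff w • P K w else 0 := by
        exact Finset.sum_congr rfl fun w _ => key w _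
    _ = if k = j then z else 0 := by
        by_cases h : k = j
        · simp only [if_pos h]; exact (rep z).symm
        · simp [h]

lemma D_algebraMap (k : Fin n) (c : K) :
    D K k (algebraMap K (FreeAlgebra K (Fin n)) c) = 0 := by
  have : algebraMap K (FreeAlgebra K (Fin n)) c = c • P K 1 := by
    rw [P_one, Algebra.algebraMap_eq_smul_one]
  rw [this, map_smul, D_P]
  simp [FreeMonoid.toList_one]

section Hom

variable (q : K) (σ : FreeAlgebra K (Fin n) →ₐ[K] FreeAlgebra K (Fin n))
  (hσ : ∀ i, σ (FreeAlgebra.ι K i) = q • FreeAlgebra.ι K i)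
  (ε : FreeAlgebra K (Fin n) →ₐ[K] K)

include hσ in
lemma sigma_P (w : FreeMonoid (Fin n)) :
    σ (P K w) = q ^ w.toList.length • P K w := by
  induction w using FreeMonoid.recOn with
  | one => simp
  | of_mul i w ih =>
      rw [P_cons, map_mul, hσ, ih, smul_mul_assoc, mul_smul_comm, smul_smul]
      have hlen : (FreeMonoid.of i * w).toList.length = w.toList.length + 1 := by
        rw [FreeMonoid.toList_mul, FreeMonoid.toList_of]
        simp
      rw [hlen, pow_succ, mul_comm]

include hσ in
lemma eigen_support (z : FreeAlgebra K (Fin n)) (hz : σ z = z)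
    (w : FreeMonoid (Fin n)) (hw : w ∈ ((E K n) z).coeff.support) :
    q ^ w.toList.length = 1 := by
  classical
  have h1 : σ z = ((E K n) z).coeff.sum fun v c => (q ^ v.toList.length * c) • P K v := by
    conv_lhs => rw [rep z]
    rw [map_finsuppSum]
    refine Finsupp.sum_congr fun v _ => ?_
    rw [map_smul, sigma_P q σ hσ, smul_smul, mul_comm]
  have h2 : (E K n) z = ((E K n) z).coeff.sum fun v c =>
      MonoidAlgebra.single v (q ^ v.toList.length * c) := by
    conv_lhs => rw [← hz, h1]
    rw [map_finsuppSum]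
    refine Finsupp.sum_congr fun v _ => ?_
    rw [map_smul, E_P, MonoidAlgebra.smul_single', mul_one]
  have h3 : ((E K n) z).coeff w = q ^ w.toList.length * ((E K n) z).coeff w := by
    conv_lhs => rw [h2]
    rw [MonoidAlgebra.coeff_finsuppSum, Finsupp.sum_apply, Finsupp.sum]
    have hcong : ∀ v ∈ ((E K n) z).coeff.support,
        (MonoidAlgebra.single v (q ^ v.toList.length * ((E K n) z).coeff v)).coeff w
        = if v = w then q ^ v.toList.length * ((E K n) z).coeff v else 0 :=
      fun v _ => MonoidAlgebra.coeff_single_apply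
    rw [Finset.sum_congr rfl hcong, Finset.sum_ite_eq' ((E K n) z).coeff.support w
      (fun v => q ^ v.toList.length * ((E K n) z).coeff v), if_pos hw]
  have hcw : ((E K n) z).coeff w ≠ 0 := Finsupp.mem_support_iff.mp hw
  have h4 : (q ^ w.toList.length - 1) * ((E K n) z).coeff w = 0 := by
    rw [sub_mul, one_mul, ← h3, sub_self]
  exact sub_eq_zero.mp ((mul_eq_zero.mp h4).resolve_right hcw)

variable (Rel : Submodule K (FreeAlgebra K (Fin n)))
  (hgen : ∀ (i : Fin n) (y : FreeAlgebra K (Fin n)), ε y = 0 →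
      FreeAlgebra.ι K i * y - q • (y * FreeAlgebra.ι K i) ∈ Rel)

include hgen in
lemma word_rot : ∀ (w : FreeMonoid (Fin n)) (y : FreeAlgebra K (Fin n)), ε y = 0 →
    P K w * y - q ^ w.toList.length • (y * P K w) ∈ Rel := by
  intro w
  induction w using FreeMonoid.recOn with
  | one => intro y hy; simp
  | of_mul i w ih =>
      intro y hy
      have hεP : ε (P K w * y) = 0 := by rw [map_mul, hy, mul_zero]
      have hεy : ε (y * FreeAlgebra.ι K i) = 0 := by rw [map_mul, hy, zero_mul]
      have h1 := hgen i (P K w * y) hεP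
      have h2 := ih (y * FreeAlgebra.ι K i) hεy
      have hmem := Submodule.add_mem Rel h1 (Submodule.smul_mem Rel q h2)
      have hlen : (FreeMonoid.of i * w).toList.length = w.toList.length + 1 := by
        rw [FreeMonoid.toList_mul, FreeMonoid.toList_of]; simp
      have heq : P K (FreeMonoid.of i * w) * y -
          q ^ (FreeMonoid.of i * w).toList.length • (y * P K (FreeMonoid.of i * w)) =
          (FreeAlgebra.ι K i * (P K w * y) - q • (P K w * y * FreeAlgebra.ι K i)) +
          q • (P K w * (y * FreeAlgebra.ι K i) -
            q ^ w.toList.length • (y * FreeAlgebra.ι K i * P K w)) := by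
        rw [hlen, P_cons, pow_succ]
        simp only [mul_assoc]
        module
      rw [heq]
      exact hmem

include hσ hgen in
lemma rot0 (z y : FreeAlgebra K (Fin n)) (hσz : σ z = z) (hεy : ε y = 0) :
    z * y - y * z ∈ Rel := by
  obtain ⟨c, hc, hzz⟩ : ∃ c, c = (E K n) z ∧ z = c.coeff.sum fun w c' => c' • P K w :=
    ⟨_, rfl, rep z⟩
  rw [hzz, Finsupp.sum, Finset.sum_mul, Finset.mul_sum, ← Finset.sum_sub_distrib]
  refine Submodule.sum_mem Rel fun w hw => ?_
  have hq1 : q ^ w.toList.length = 1 := by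
    refine eigen_support q σ hσ z hσz w ?_
    rw [← hc]; exact hw
  have hword := word_rot q ε Rel hgen w y hεy
  rw [hq1, one_smul] at hword
  have heq : c.coeff w • P K w * y - y * (c.coeff w • P K w) = c.coeff w • (P K w * y - y * P K w) := by
    rw [smul_sub, smul_mul_assoc, mul_smul_comm]
  rw [heq]
  exact Submodule.smul_mem Rel _ hword

end Hom

end QdivAux

attribute [local instance 100] LieRing.ofAssociativeRing


/-- The `q`-divergence is a cocycle on the Lie algebra `tder_n^{lℕ}` of tangential
derivations whose components have weight divisible by `l`:
`u·qdiv(v) - v·qdiv(u) = qdiv([u,v])` in the `q`-trace space `qtr_n`.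

Here the free Lie algebra `lie_n` sits inside the free associative algebra
`A = FreeAlgebra K (Fin n)` as the Lie subalgebra generated by the generators `x_i`;
`σ` is the algebra endomorphism `x_i ↦ q·x_i`, whose fixed points are exactly the sums
of homogeneous elements of weight divisible by `l` (for `q` a primitive `l`-th root of
unity in characteristic zero); `ε` is the augmentation; `d k` are the decomposition
maps `z = ε(z) + Σ_k (∂_k z)·x_k`; `U`, `V` are the tangential derivations determined
by `a`, `b`; and equality in `qtr_n` is membership of the difference in the span `Rel`
of the relations `x_i·y - q·(y·x_i)` for `y` in the augmentation ideal. -/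
theorem qdiv_is_cocycle (K : Type*) [Field K] [CharZero K]
    (l : ℕ) (hl : 1 ≤ l) (q : K) (hq : IsPrimitiveRoot q l)
    (n : ℕ) (x : Fin n → FreeAlgebra K (Fin n)) (hx : ∀ i, x i = FreeAlgebra.ι K i)
    (σ : FreeAlgebra K (Fin n) →ₐ[K] FreeAlgebra K (Fin n))
    (hσ : ∀ i, σ (x i) = q • x i)
    (ε : FreeAlgebra K (Fin n) →ₐ[K] K) (hε : ∀ i, ε (x i) = 0)
    (d : Fin n → (FreeAlgebra K (Fin n) →ₗ[K] FreeAlgebra K (Fin n)))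
    (hd : ∀ z : FreeAlgebra K (Fin n),
      z = algebraMap K (FreeAlgebra K (Fin n)) (ε z) + ∑ k, d k z * x k)
    (a b : Fin n → FreeAlgebra K (Fin n))
    (haLie : ∀ k, a k ∈
      LieSubalgebra.lieSpan K (FreeAlgebra K (Fin n)) (Set.range (FreeAlgebra.ι K)))
    (hbLie : ∀ k, b k ∈
      LieSubalgebra.lieSpan K (FreeAlgebra K (Fin n)) (Set.range (FreeAlgebra.ι K)))
    (haW : ∀ k, σ (a k) = a k) (hbW : ∀ k, σ (b k) = b k)
    (U V : FreeAlgebra K (Fin n) →ₗ[K] FreeAlgebra K (Fin n))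
    (hUder : ∀ z w, U (z * w) = U z * w + z * U w)
    (hVder : ∀ z w, V (z * w) = V z * w + z * V w)
    (hU : ∀ k, U (x k) = ⁅x k, a k⁆) (hV : ∀ k, V (x k) = ⁅x k, b k⁆)
    (c : Fin n → FreeAlgebra K (Fin n))
    (hc : ∀ k, c k = U (b k) - V (a k) + ⁅a k, b k⁆)
    (Rel : Submodule K (FreeAlgebra K (Fin n)))
    (hRel : Rel = Submodule.span K
      {z | ∃ i : Fin n, ∃ y : FreeAlgebra K (Fin n), ε y = 0 ∧ z = x i * y - q • (y * x i)}) :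
    U (∑ k, x k * d k (b k)) - V (∑ k, x k * d k (a k)) - ∑ k, x k * d k (c k) ∈ Rel := by
  classical
  have hqne : q ≠ 0 := hq.ne_zero (by omega)
  -- ε vanishes on Lie elements
  have hεLie : ∀ z ∈ LieSubalgebra.lieSpan K (FreeAlgebra K (Fin n))
      (Set.range (FreeAlgebra.ι K)), ε z = 0 := by
    intro z hz
    let S : LieSubalgebra K (FreeAlgebra K (Fin n)) :=
      { toSubmodule := LinearMap.ker ε.toLinearMap,
        lie_mem' := by
          intro u v hu hv
          have hu' : ε u = 0 := hu
          have hv' : ε v = 0 := hv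
          show ε (u * v - v * u) = 0
          rw [map_sub, map_mul, map_mul, hu', hv']
          simp }
    have hsub : Set.range (FreeAlgebra.ι K) ⊆ (S : Set (FreeAlgebra K (Fin n))) := by
      rintro _ ⟨i, rfl⟩
      show ε (FreeAlgebra.ι K i) = 0
      rw [← hx i]; exact hε i
    exact (LieSubalgebra.lieSpan_le.mpr hsub) hz
  have hεa : ∀ k, ε (a k) = 0 := fun k => hεLie _ (haLie k)
  have hεb : ∀ k, ε (b k) = 0 := fun k => hεLie _ (hbLie k)
  -- d agrees with the canonical strip operator D
  have hdD : ∀ (k : Fin n) (z : FreeAlgebra K (Fin n)), d k z = QdivAux.D K k z := by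
    intro k z
    conv_rhs => rw [hd z]
    rw [map_add, QdivAux.D_algebraMap, map_sum, zero_add]
    have hcong : ∀ j ∈ Finset.univ, QdivAux.D K k (d j z * x j)
        = if k = j then d j z else 0 := by
      intro j _
      rw [hx j, QdivAux.D_mul_ι]
    rw [Finset.sum_congr rfl hcong]
    simp
  -- uniqueness of the decomposition
  have huniq : ∀ (lam : K) (Ez : Fin n → FreeAlgebra K (Fin n)) (k : Fin n),
      d k (algebraMap K (FreeAlgebra K (Fin n)) lam + ∑ m, Ez m * x m) = Ez k := by
    intro lam Ez k
    rw [hdD k]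
    rw [map_add, QdivAux.D_algebraMap, map_sum, zero_add]
    have hcong : ∀ j ∈ Finset.univ, QdivAux.D K k (Ez j * x j)
        = if k = j then Ez j else 0 := by
      intro j _
      rw [hx j, QdivAux.D_mul_ι]
    rw [Finset.sum_congr rfl hcong]
    simp
  -- product rule for d
  have hexp : ∀ z w : FreeAlgebra K (Fin n),
      z * w = algebraMap K (FreeAlgebra K (Fin n)) (ε z * ε w) +
        ∑ j, (ε w • d j z + z * d j w) * x j := by
    intro z w
    have hzalg : z * algebraMap K (FreeAlgebra K (Fin n)) (ε w) = ε w • z := by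
      rw [Algebra.algebraMap_eq_smul_one, mul_smul_comm, mul_one]
    have halg : algebraMap K (FreeAlgebra K (Fin n)) (ε z * ε w)
        = ε w • algebraMap K (FreeAlgebra K (Fin n)) (ε z) := by
      rw [Algebra.algebraMap_eq_smul_one, Algebra.algebraMap_eq_smul_one, smul_smul,
        mul_comm]
    calc z * w = z * (algebraMap K (FreeAlgebra K (Fin n)) (ε w) + ∑ j, d j w * x j) := by
          rw [← hd w]
      _ = ε w • z + ∑ j, z * (d j w * x j) := by rw [mul_add, hzalg, Finset.mul_sum]
      _ = ε w • (algebraMap K (FreeAlgebra K (Fin n)) (ε z) + ∑ j, d j z * x j)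
            + ∑ j, z * (d j w * x j) := by rw [← hd z]
      _ = algebraMap K (FreeAlgebra K (Fin n)) (ε z * ε w) +
            ∑ j, (ε w • d j z + z * d j w) * x j := by
          rw [halg, smul_add, Finset.smul_sum]
          simp only [add_mul, Finset.sum_add_distrib, smul_mul_assoc, mul_assoc]
          abel
  have hprod : ∀ (z w : FreeAlgebra K (Fin n)) (k : Fin n),
      d k (z * w) = ε w • d k z + z * d k w := by
    intro z w k
    conv_lhs => rw [hexp z w]
    exact huniq _ _ k
  -- derivation formula
  have hder : ∀ (W : FreeAlgebra K (Fin n) →ₗ[K] FreeAlgebra K (Fin n))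
      (g : Fin n → FreeAlgebra K (Fin n)),
      (∀ z w, W (z * w) = W z * w + z * W w) →
      (∀ k, W (x k) = ⁅x k, g k⁆) → (∀ k, ε (g k) = 0) →
      ∀ (z : FreeAlgebra K (Fin n)) (m : Fin n),
        d m (W z) = W (d m z) + ((∑ j, d j z * (x j * d m (g j))) - d m z * g m) := by
    intro W g hWder hW hεg
    have hW1 : W 1 = 0 := by
      have h := hWder 1 1
      simp only [mul_one, one_mul] at h
      exact left_eq_add.mp h
    have hWalg : ∀ cK : K, W (algebraMap K (FreeAlgebra K (Fin n)) cK) = 0 := by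
      intro cK
      rw [Algebra.algebraMap_eq_smul_one, map_smul, hW1, smul_zero]
    have hg_rep : ∀ j, g j = ∑ m, d m (g j) * x m := by
      intro j
      conv_lhs => rw [hd (g j)]
      rw [hεg j, map_zero, zero_add]
    intro z m
    have hWexp : W z = algebraMap K (FreeAlgebra K (Fin n)) 0 +
        ∑ m, (W (d m z) + ((∑ j, d j z * (x j * d m (g j))) - d m z * g m)) * x m := by
      have step1 : W z = ∑ j, (W (d j z) * x j + d j z * (x j * g j - g j * x j)) := by
        conv_lhs => rw [hd z]
        rw [map_add, hWalg, zero_add, map_sum]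
        refine Finset.sum_congr rfl fun j _ => ?_
        rw [hWder, hW j, Ring.lie_def]
      have step2 : ∀ j, d j z * (x j * g j) = ∑ m, (d j z * (x j * d m (g j))) * x m := by
        intro j
        conv_lhs => rw [hg_rep j]
        rw [Finset.mul_sum, Finset.mul_sum]
        refine Finset.sum_congr rfl fun m _ => ?_
        simp only [mul_assoc]
      calc W z = ∑ j, W (d j z) * x j +
            ((∑ j, ∑ m, (d j z * (x j * d m (g j))) * x m) - ∑ j, (d j z * g j) * x j) := by
            rw [step1, Finset.sum_add_distrib]
            congr 1
            rw [← Finset.sum_sub_distrib]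
            refine Finset.sum_congr rfl fun j _ => ?_
            rw [mul_sub, step2 j, ← mul_assoc]
        _ = algebraMap K (FreeAlgebra K (Fin n)) 0 +
            ∑ m, (W (d m z) + ((∑ j, d j z * (x j * d m (g j))) - d m z * g m)) * x m := by
            rw [map_zero, zero_add]
            rw [Finset.sum_comm (f := fun j m => (d j z * (x j * d m (g j))) * x m)]
            simp only [add_mul, sub_mul, Finset.sum_mul]
            rw [Finset.sum_add_distrib, Finset.sum_sub_distrib]
    conv_lhs => rw [hWexp]
    exact huniq _ _ m
  have hdU := hder U a hUder hU hεa
  have hdV := hder V b hVder hV hεb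
  -- behaviour of d under σ
  have hdσ : ∀ (z : FreeAlgebra K (Fin n)) (m : Fin n),
      d m (σ z) = q • σ (d m z) := by
    intro z m
    have hσexp : σ z = algebraMap K (FreeAlgebra K (Fin n)) (ε z) +
        ∑ j, (q • σ (d j z)) * x j := by
      conv_lhs => rw [hd z]
      rw [map_add, map_sum, AlgHom.commutes]
      congr 1
      refine Finset.sum_congr rfl fun j _ => ?_
      rw [map_mul, hσ j, mul_smul_comm, smul_mul_assoc]
    conv_lhs => rw [hσexp]
    exact huniq _ _ m
  have hσda : ∀ (k j : Fin n), σ (d j (a k)) = q⁻¹ • d j (a k) := by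
    intro k j
    have h := hdσ (a k) j
    rw [haW k] at h
    calc σ (d j (a k)) = q⁻¹ • (q • σ (d j (a k))) := by
          rw [smul_smul, inv_mul_cancel₀ hqne, one_smul]
      _ = q⁻¹ • d j (a k) := by rw [← h]
  have hσdb : ∀ (k j : Fin n), σ (d j (b k)) = q⁻¹ • d j (b k) := by
    intro k j
    have h := hdσ (b k) j
    rw [hbW k] at h
    calc σ (d j (b k)) = q⁻¹ • (q • σ (d j (b k))) := by
          rw [smul_smul, inv_mul_cancel₀ hqne, one_smul]
      _ = q⁻¹ • d j (b k) := by rw [← h]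
  have hσxda : ∀ (k j : Fin n), σ (x k * d j (a k)) = x k * d j (a k) := by
    intro k j
    rw [map_mul, hσ k, hσda k j, smul_mul_assoc, mul_smul_comm, smul_smul,
      mul_inv_cancel₀ hqne, one_smul]
  have hσxdb : ∀ (k j : Fin n), σ (x k * d j (b k)) = x k * d j (b k) := by
    intro k j
    rw [map_mul, hσ k, hσdb k j, smul_mul_assoc, mul_smul_comm, smul_smul,
      mul_inv_cancel₀ hqne, one_smul]
  -- generators of Rel
  have hgen : ∀ (i : Fin n) (y : FreeAlgebra K (Fin n)), ε y = 0 →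
      FreeAlgebra.ι K i * y - q • (y * FreeAlgebra.ι K i) ∈ Rel := by
    intro i y hy
    rw [hRel, ← hx i]
    exact Submodule.subset_span ⟨i, y, hy, rfl⟩
  have hσι : ∀ i, σ (FreeAlgebra.ι K i) = q • FreeAlgebra.ι K i := by
    intro i; rw [← hx i]; exact hσ i
  have hrot : ∀ z y : FreeAlgebra K (Fin n), σ z = z → ε y = 0 → z * y - y * z ∈ Rel :=
    fun z y hz hy => QdivAux.rot0 q σ hσι ε Rel hgen z y hz hy
  -- pointwise formula for d k (c k)
  have hdc : ∀ k, d k (c k) =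
      (U (d k (b k)) + ((∑ j, d j (b k) * (x j * d k (a j))) - d k (b k) * a k))
      - (V (d k (a k)) + ((∑ j, d j (a k) * (x j * d k (b j))) - d k (a k) * b k))
      + (a k * d k (b k) - b k * d k (a k)) := by
    intro k
    rw [hc k, Ring.lie_def, map_add, map_sub, map_sub]
    rw [hdU (b k) k, hdV (a k) k, hprod (a k) (b k) k, hprod (b k) (a k) k,
      hεa k, hεb k]
    simp only [zero_smul, zero_add]
  have hpt : ∀ k, U (x k * d k (b k)) - V (x k * d k (a k)) - x k * d k (c k)
      = ((x k * d k (b k)) * a k - a k * (x k * d k (b k)))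
        + (b k * (x k * d k (a k)) - (x k * d k (a k)) * b k)
        + ((∑ j, (x k * d j (a k)) * (x j * d k (b j)))
          - ∑ j, (x k * d j (b k)) * (x j * d k (a j))) := by
    intro k
    rw [hUder, hVder, hU k, hV k, Ring.lie_def, Ring.lie_def, hdc k]
    simp only [mul_add, mul_sub, add_mul, sub_mul, Finset.mul_sum, mul_assoc]
    abel
  have hsum : U (∑ k, x k * d k (b k)) - V (∑ k, x k * d k (a k)) - ∑ k, x k * d k (c k)
      = ∑ k, (U (x k * d k (b k)) - V (x k * d k (a k)) - x k * d k (c k)) := by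
    rw [map_sum, map_sum, ← Finset.sum_sub_distrib, ← Finset.sum_sub_distrib]
  rw [hsum, Finset.sum_congr rfl (fun k _ => hpt k)]
  rw [Finset.sum_add_distrib, Finset.sum_add_distrib]
  refine Submodule.add_mem _ (Submodule.add_mem _ ?_ ?_) ?_
  · refine Submodule.sum_mem _ fun k _ => ?_
    have h := hrot (a k) (x k * d k (b k)) (haW k)
      (by rw [map_mul, hε k, zero_mul])
    have h2 := Submodule.neg_mem _ h
    rwa [neg_sub] at h2
  · refine Submodule.sum_mem _ fun k _ => ?_
    exact hrot (b k) (x k * d k (a k)) (hbW k) (by rw [map_mul, hε k, zero_mul])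
  · rw [Finset.sum_sub_distrib]
    have hswap : (∑ k, ∑ j, (x k * d j (b k)) * (x j * d k (a j)))
        = ∑ k, ∑ j, (x j * d k (b j)) * (x k * d j (a k)) := Finset.sum_comm
    rw [hswap, ← Finset.sum_sub_distrib]
    refine Submodule.sum_mem _ fun k _ => ?_
    rw [← Finset.sum_sub_distrib]
    refine Submodule.sum_mem _ fun j _ => ?_
    exact hrot (x k * d j (a k)) (x j * d k (b j)) (hσxda k j)
      (by rw [map_mul, hε j, zero_mul])
end
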